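/- Every finite 5-path-degenerate graph G has a 3-segment representation. -/

import Mathlib

/-- The relative interior of the axis-parallel segment `Set.Icc a b` in `ℝ³`:
the points of the segment that are strictly between the endpoints in the (unique)
coordinate where the segment has positive length. -/
def segRelInt (a b : Fin 3 → ℝ) : Set (Fin 3 → ℝ) :=
  Set.Icc a b ∩ {x | ∀ i, a i < b i → a i < x i ∧ x i < b i}

/-- `lo, hi : V → Fin 3 → ℝ` give a `3`-segment representation of `G`: every vertex is
mapped to an axis-parallel segment of positive length (a product of three closed
intervals, exactly two of which are single points), two distinct vertices are adjacent
iff the corresponding segments intersect, the relative interiors of any two distinct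
segments are disjoint, and no two distinct segments lie on a common line. -/
def IsSegRep {V : Type*} (G : SimpleGraph V) (lo hi : V → Fin 3 → ℝ) : Prop :=
  (∀ v, ∃ i, lo v i < hi v i ∧ ∀ j, j ≠ i → lo v j = hi v j) ∧
  (∀ u v : V, u ≠ v →
    (G.Adj u v ↔ (Set.Icc (lo u) (hi u) ∩ Set.Icc (lo v) (hi v)).Nonempty)) ∧
  (∀ u v : V, u ≠ v → Disjoint (segRelInt (lo u) (hi u)) (segRelInt (lo v) (hi v))) ∧
  (∀ u v : V, u ≠ v → ¬ Collinear ℝ (Set.Icc (lo u) (hi u) ∪ Set.Icc (lo v) (hi v)))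

/-- `G` is `p`-path-degenerate: every subgraph with at least one vertex contains a
vertex of degree at most 1, or a path with `p` internal vertices each of degree
exactly 2 in the subgraph. -/
def PPathDegenerate {V : Type*} (p : ℕ) (G : SimpleGraph V) : Prop :=
  ∀ H : G.Subgraph, H.verts.Nonempty →
    (∃ v ∈ H.verts, (H.neighborSet v).ncard ≤ 1) ∨
    (∃ x : Fin (p + 2) → V, Function.Injective x ∧ (∀ i, x i ∈ H.verts) ∧
      (∀ i : Fin (p + 1), H.Adj (x i.castSucc) (x i.succ)) ∧
      (∀ i : Fin (p + 2), 0 < (i : ℕ) → (i : ℕ) < p + 1 →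
        (H.neighborSet (x i)).ncard = 2))

namespace SegAux

abbrev Pt := Fin 3 → ℝ

/-- axis-parallel segment data -/
def AxSeg (lo hi : Pt) (d : Fin 3) : Prop :=
  lo d < hi d ∧ ∀ j, j ≠ d → lo j = hi j

lemma AxSeg.le {lo hi : Pt} {d : Fin 3} (h : AxSeg lo hi d) : lo ≤ hi := by
  intro j
  by_cases hj : j = d
  · subst hj; exact le_of_lt h.1
  · exact le_of_eq (h.2 j hj)

lemma mem_Icc' {a b x : Pt} : x ∈ Set.Icc a b ↔ ∀ j, a j ≤ x j ∧ x j ≤ b j := by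
  simp [Set.mem_Icc, Pi.le_def, forall_and]

lemma AxSeg.fixed {lo hi : Pt} {d : Fin 3} (h : AxSeg lo hi d) {j : Fin 3} (hj : j ≠ d)
    {x : Pt} (hx : x ∈ Set.Icc lo hi) : x j = lo j := by
  rw [mem_Icc'] at hx
  have := hx j
  have e := h.2 j hj
  linarith [this.1, this.2]

lemma AxSeg.lo_mem {lo hi : Pt} {d : Fin 3} (h : AxSeg lo hi d) : lo ∈ Set.Icc lo hi :=
  ⟨le_refl _, h.le⟩

lemma AxSeg.hi_mem {lo hi : Pt} {d : Fin 3} (h : AxSeg lo hi d) : hi ∈ Set.Icc lo hi :=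
  ⟨h.le, le_refl _⟩

/-- two segments with a common fixed axis where values differ are disjoint -/
lemma disj_of_fixed {lo₁ hi₁ lo₂ hi₂ : Pt} {d₁ d₂ j : Fin 3}
    (h₁ : AxSeg lo₁ hi₁ d₁) (h₂ : AxSeg lo₂ hi₂ d₂)
    (hj₁ : j ≠ d₁) (hj₂ : j ≠ d₂) (hne : lo₁ j ≠ lo₂ j) :
    Set.Icc lo₁ hi₁ ∩ Set.Icc lo₂ hi₂ = ∅ := by
  ext x
  simp only [Set.mem_inter_iff, Set.mem_empty_iff_false, iff_false, not_and]
  intro hx1 hx2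
  exact hne ((h₁.fixed hj₁ hx1).symm.trans (h₂.fixed hj₂ hx2))

/-- perpendicular segments sharing a point intersect exactly there -/
lemma inter_singleton {lo₁ hi₁ lo₂ hi₂ : Pt} {d₁ d₂ : Fin 3} {z : Pt}
    (h₁ : AxSeg lo₁ hi₁ d₁) (h₂ : AxSeg lo₂ hi₂ d₂) (hd : d₁ ≠ d₂)
    (hz₁ : z ∈ Set.Icc lo₁ hi₁) (hz₂ : z ∈ Set.Icc lo₂ hi₂) :
    Set.Icc lo₁ hi₁ ∩ Set.Icc lo₂ hi₂ = {z} := by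
  ext x
  simp only [Set.mem_inter_iff, Set.mem_singleton_iff]
  constructor
  · rintro ⟨hx1, hx2⟩
    funext j
    by_cases hj : j = d₂
    · have hj1 : j ≠ d₁ := by rw [hj]; exact hd.symm
      rw [h₁.fixed hj1 hx1, h₁.fixed hj1 hz₁]
    · rw [h₂.fixed hj hx2, h₂.fixed hj hz₂]
  · rintro rfl; exact ⟨hz₁, hz₂⟩

/-- Criterion for two axis-parallel segments not to be collinear. -/
lemma not_collinear {lo₁ hi₁ lo₂ hi₂ : Pt} {d₁ d₂ : Fin 3}
    (h₁ : AxSeg lo₁ hi₁ d₁) (h₂ : AxSeg lo₂ hi₂ d₂)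
    (hd : d₁ ≠ d₂ ∨ ∃ j, j ≠ d₁ ∧ lo₁ j ≠ lo₂ j) :
    ¬ Collinear ℝ (Set.Icc lo₁ hi₁ ∪ Set.Icc lo₂ hi₂) := by
  intro hc
  have hbase : lo₁ ∈ Set.Icc lo₁ hi₁ ∪ Set.Icc lo₂ hi₂ := Or.inl h₁.lo_mem
  obtain ⟨v, hv⟩ := (collinear_iff_of_mem hbase).mp hc
  obtain ⟨r₁, e₁⟩ := hv hi₁ (Or.inl h₁.hi_mem)
  obtain ⟨r₂, e₂⟩ := hv lo₂ (Or.inr h₂.lo_mem)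
  obtain ⟨r₃, e₃⟩ := hv hi₂ (Or.inr h₂.hi_mem)
  have e₁' : ∀ j, hi₁ j = r₁ * v j + lo₁ j := by
    intro j; rw [e₁]; simp [vadd_eq_add]
  have e₂' : ∀ j, lo₂ j = r₂ * v j + lo₁ j := by
    intro j; rw [e₂]; simp [vadd_eq_add]
  have e₃' : ∀ j, hi₂ j = r₃ * v j + lo₁ j := by
    intro j; rw [e₃]; simp [vadd_eq_add]
  have hr₁ : r₁ * v d₁ ≠ 0 := by
    have := e₁' d₁
    have hlt := h₁.1
    intro hz
    rw [hz] at this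
    linarith [this]
  have hvj : ∀ j, j ≠ d₁ → v j = 0 := by
    intro j hj
    have := e₁' j
    rw [← h₁.2 j hj] at this
    have hr1 : r₁ ≠ 0 := fun hz => hr₁ (by rw [hz]; ring)
    have : r₁ * v j = 0 := by linarith
    rcases mul_eq_zero.mp this with h | h
    · exact absurd h hr1
    · exact h
  rcases hd with hne | ⟨j, hj, hjne⟩
  · have hl : lo₂ d₂ = lo₁ d₂ := by
      have := e₂' d₂; rw [hvj d₂ (Ne.symm hne)] at this; linarith
    have hh : hi₂ d₂ = lo₁ d₂ := by
      have := e₃' d₂; rw [hvj d₂ (Ne.symm hne)] at this; linarith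
    have := h₂.1
    rw [hl, hh] at this
    exact lt_irrefl _ this
  · have := e₂' j
    rw [hvj j hj] at this
    apply hjne
    linarith

/-- Segments on the same line are collinear (used to extract coordinate facts). -/
lemma collinear_of_same {lo₁ hi₁ lo₂ hi₂ : Pt} {d : Fin 3}
    (h₁ : AxSeg lo₁ hi₁ d) (h₂ : AxSeg lo₂ hi₂ d)
    (hsame : ∀ j, j ≠ d → lo₁ j = lo₂ j) :
    Collinear ℝ (Set.Icc lo₁ hi₁ ∪ Set.Icc lo₂ hi₂) := by
  have hbase : lo₁ ∈ Set.Icc lo₁ hi₁ ∪ Set.Icc lo₂ hi₂ := Or.inl h₁.lo_mem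
  rw [collinear_iff_of_mem hbase]
  refine ⟨(Pi.single d 1 : Pt), ?_⟩
  intro q hq
  refine ⟨q d - lo₁ d, ?_⟩
  funext j
  show q j = (((q d - lo₁ d) • (Pi.single d (1:ℝ) : Pt)) +ᵥ lo₁) j
  have : (((q d - lo₁ d) • (Pi.single d (1:ℝ) : Pt)) +ᵥ lo₁) j
      = (q d - lo₁ d) * ((Pi.single d (1:ℝ) : Pt) j) + lo₁ j := by
    simp [vadd_eq_add]
  rw [this]
  by_cases hj : j = d
  · subst hj; simp
  · rw [Pi.single_eq_of_ne hj]
    simp only [mul_zero, zero_add]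
    have fixcoord : ∀ {lo hi : Pt}, AxSeg lo hi d → q ∈ Set.Icc lo hi → q j = lo j := by
      intro lo hi hax hmem
      have h1 := hmem.1 j
      have h2 := hmem.2 j
      have := hax.2 j hj
      linarith
    rcases hq with hq | hq
    · exact fixcoord h₁ hq
    · rw [fixcoord h₂ hq]
      exact (hsame j hj).symm

lemma segRelInt_subset (a b : Pt) : segRelInt a b ⊆ Set.Icc a b :=
  Set.inter_subset_left

/-- a point of the segment whose `d`-coordinate is extreme is not in the rel. interior -/
lemma endpoint_not_mem_relint {lo hi : Pt} {d : Fin 3} (h : AxSeg lo hi d) {x : Pt}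
    (hx : x d = lo d ∨ x d = hi d) : x ∉ segRelInt lo hi := by
  rintro ⟨_, hmem⟩
  have := hmem d h.1
  rcases hx with e | e <;> rw [e] at this <;> linarith [this.1, this.2]

/-- interior point membership -/
lemma mem_relint {lo hi : Pt} {d : Fin 3} (h : AxSeg lo hi d) {x : Pt}
    (hx : x ∈ Set.Icc lo hi) (hd : lo d < x d) (hd' : x d < hi d) :
    x ∈ segRelInt lo hi := by
  refine ⟨hx, fun i hi' => ?_⟩
  by_cases hid : i = d
  · subst hid; exact ⟨hd, hd'⟩
  · exact absurd hi' (by rw [h.2 i hid]; exact lt_irrefl _)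

/-- disjoint segments have disjoint relative interiors -/
lemma relint_disjoint_of_inter_empty {a b c d : Pt}
    (h : Set.Icc a b ∩ Set.Icc c d = ∅) :
    Disjoint (segRelInt a b) (segRelInt c d) := by
  rw [Set.disjoint_left]
  intro x hx1 hx2
  have : x ∈ Set.Icc a b ∩ Set.Icc c d := ⟨segRelInt_subset _ _ hx1, segRelInt_subset _ _ hx2⟩
  rw [h] at this
  exact this

/-- touching segments have disjoint relative interiors when the touching point
is not interior to one of them -/
lemma relint_disjoint_of_inter_singleton {a b c d : Pt} {z : Pt}
    (h : Set.Icc a b ∩ Set.Icc c d = {z}) (hz : z ∉ segRelInt a b ∨ z ∉ segRelInt c d) :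
    Disjoint (segRelInt a b) (segRelInt c d) := by
  rw [Set.disjoint_left]
  intro x hx1 hx2
  have hx : x ∈ Set.Icc a b ∩ Set.Icc c d := ⟨segRelInt_subset _ _ hx1, segRelInt_subset _ _ hx2⟩
  rw [h, Set.mem_singleton_iff] at hx
  subst hx
  rcases hz with hz | hz
  · exact hz hx1
  · exact hz hx2

/-- choose a value in an open interval avoiding a finite bad set -/
lemma exists_gen {l r : ℝ} (hlr : l < r) (bad : Set ℝ) (hbad : bad.Finite) :
    ∃ x, l < x ∧ x < r ∧ x ∉ bad := by
  have : ((Set.Ioo l r) \ bad).Nonempty :=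
    Set.Infinite.nonempty (Set.Infinite.diff (Set.Ioo_infinite hlr) hbad)
  obtain ⟨x, hx⟩ := this
  exact ⟨x, hx.1.1, hx.1.2, hx.2⟩

/-- choose a value slightly above `f` such that the whole interval `(f, g]` avoids `bad`. -/
lemma exists_close (f : ℝ) (bad : Set ℝ) (hbad : bad.Finite) :
    ∃ g, f < g ∧ ∀ x, f < x → x ≤ g → x ∉ bad := by
  classical
  by_cases hne : (bad ∩ Set.Ioi f).Nonempty
  · have hfin : (bad ∩ Set.Ioi f).Finite := hbad.inter_of_left _
    obtain ⟨m, hm, hmin⟩ := Set.exists_min_image _ id hfin hne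
    have hmf : f < m := hm.2
    refine ⟨(f + m) / 2, by linarith, fun x hx1 hx2 hxb => ?_⟩
    have : m ≤ x := hmin x ⟨hxb, hx1⟩
    linarith
  · refine ⟨f + 1, by linarith, fun x hx1 _ hxb => hne ⟨x, hxb, hx1⟩⟩

lemma exists_third : ∀ x y : Fin 3, ∃ j, j ≠ x ∧ j ≠ y := by decide

lemma fin3_cases : ∀ a m n j : Fin 3, m ≠ a → n ≠ a → n ≠ m →
    (j = a ∨ j = m ∨ j = n) := by decide

section Ambient

variable {V : Type*}

/-- The set of all coordinate values used by segments of vertices of `s'`. -/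
def coordSet (s' : Finset V) (lo hi : V → Pt) : Set ℝ :=
  ⋃ v ∈ s', ⋃ j : Fin 3, {lo v j, hi v j}

lemma coordSet_finite (s' : Finset V) (lo hi : V → Pt) : (coordSet s' lo hi).Finite := by
  apply Set.Finite.biUnion s'.finite_toSet
  intro v _
  apply Set.finite_iUnion
  intro j
  exact (Set.finite_singleton _).insert _

lemma lo_mem_coordSet {s' : Finset V} {lo hi : V → Pt} {v : V} (hv : v ∈ s') (j : Fin 3) :
    lo v j ∈ coordSet s' lo hi := by
  apply Set.mem_biUnion hv
  exact Set.mem_iUnion.mpr ⟨j, by simp⟩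

lemma hi_mem_coordSet {s' : Finset V} {lo hi : V → Pt} {v : V} (hv : v ∈ s') (j : Fin 3) :
    hi v j ∈ coordSet s' lo hi := by
  apply Set.mem_biUnion hv
  exact Set.mem_iUnion.mpr ⟨j, by simp⟩

end Ambient

end SegAux
namespace SegAux

lemma exists_ne_coord_of_not_collinear {lo₁ hi₁ lo₂ hi₂ : Pt} {d : Fin 3}
    (h₁ : AxSeg lo₁ hi₁ d) (h₂ : AxSeg lo₂ hi₂ d)
    (hnc : ¬ Collinear ℝ (Set.Icc lo₁ hi₁ ∪ Set.Icc lo₂ hi₂)) :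
    ∃ j, j ≠ d ∧ lo₁ j ≠ lo₂ j := by
  by_contra hcon
  push_neg at hcon
  exact hnc (collinear_of_same h₁ h₂ hcon)

variable {V : Type*}

/-- Add a segment attached to the segment of `u`, avoiding all segments of `s'`. -/
lemma extend_leaf (s' : Finset V) (lo hi : V → Pt)
    (hax : ∀ v ∈ s', ∃ d, AxSeg (lo v) (hi v) d)
    (hnc : ∀ u ∈ s', ∀ v ∈ s', u ≠ v →
      ¬ Collinear ℝ (Set.Icc (lo u) (hi u) ∪ Set.Icc (lo v) (hi v)))
    {u : V} (hu : u ∈ s') :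
    ∃ (l h : Pt) (d : Fin 3) (p : Pt),
      AxSeg l h d ∧
      Set.Icc l h ∩ Set.Icc (lo u) (hi u) = {p} ∧
      p ∈ segRelInt (lo u) (hi u) ∧ p ∉ segRelInt l h ∧
      (∀ w ∈ s', w ≠ u → Set.Icc l h ∩ Set.Icc (lo w) (hi w) = ∅) ∧
      (∀ w ∈ s', ¬ Collinear ℝ (Set.Icc l h ∪ Set.Icc (lo w) (hi w))) := by
  classical
  obtain ⟨α, hα⟩ := hax u hu
  obtain ⟨m, hmα, -⟩ := exists_third α α
  obtain ⟨n, hnα, hnm⟩ := exists_third α m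
  set bad := coordSet s' lo hi with hbad_def
  have hbadfin := coordSet_finite s' lo hi
  obtain ⟨t, ht1, ht2, ht3⟩ := exists_gen hα.1 bad hbadfin
  obtain ⟨g, hg1, hg2⟩ := exists_close (lo u m) bad hbadfin
  set p : Pt := Function.update (lo u) α t with hp_def
  set A : Pt := Function.update p m g with hA_def
  have hpα : p α = t := by simp [hp_def]
  have hpj : ∀ j, j ≠ α → p j = lo u j := by
    intro j hj; simp [hp_def, Function.update_of_ne hj]
  have hAm : A m = g := by simp [hA_def]
  have hAj : ∀ j, j ≠ m → A j = p j := by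
    intro j hj; simp [hA_def, Function.update_of_ne hj]
  have hpm : p m = lo u m := hpj m hmα
  have hS1 : AxSeg p A m := by
    constructor
    · rw [hAm, hpm]; exact hg1
    · intro j hj; exact (hAj j hj).symm
  have hpu : p ∈ Set.Icc (lo u) (hi u) := by
    rw [mem_Icc']
    intro j
    by_cases hj : j = α
    · subst hj; rw [hpα]; exact ⟨le_of_lt ht1, le_of_lt ht2⟩
    · rw [hpj j hj, ← hα.2 j hj]; exact ⟨le_refl _, le_refl _⟩
  have hpS1 : p ∈ Set.Icc p A := hS1.lo_mem
  -- coordinates of points in S1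
  have hS1coord : ∀ x ∈ Set.Icc p A, x α = t ∧ x n = lo u n ∧
      (lo u m ≤ x m ∧ x m ≤ g) := by
    intro x hx
    have hαm : α ≠ m := fun hh => hmα hh.symm
    refine ⟨by rw [hS1.fixed hαm hx, hpα], ?_, ?_⟩
    · rw [hS1.fixed hnm hx, hpj n hnα]
    · rw [mem_Icc'] at hx
      have := hx m
      rw [hpm] at this
      rw [hAm] at this
      exact this
  have hαm : α ≠ m := fun hh => hmα hh.symm
  refine ⟨p, A, m, p, hS1, inter_singleton hS1 hα hmα hpS1 hpu, ?_, ?_, ?_, ?_⟩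
  · exact mem_relint hα hpu (by rw [hpα]; exact ht1) (by rw [hpα]; exact ht2)
  · exact endpoint_not_mem_relint hS1 (Or.inl rfl)
  · intro w hw1 hwu
    obtain ⟨dw, hw⟩ := hax w hw1
    rcases fin3_cases α m n dw hmα hnα hnm with hd | hd | hd
    · rw [hd] at hw
      by_cases hcn : lo w n = lo u n
      · -- need the m-range argument
        have hm_ne : lo w m ≠ lo u m := by
          intro he
          apply hnc u hu w hw1 (Ne.symm hwu)
          apply collinear_of_same hα hw
          intro j hj
          rcases fin3_cases α m n j hmα hnα hnm with rfl | rfl | rfl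
          · exact absurd rfl hj
          · exact he.symm
          · exact hcn.symm
        have hwm_bad : lo w m ∈ bad := lo_mem_coordSet hw1 m
        have hout : lo w m < lo u m ∨ g < lo w m := by
          rcases lt_or_ge (lo u m) (lo w m) with hlt | hle
          · right
            by_contra hle2
            push_neg at hle2
            exact hg2 (lo w m) hlt hle2 hwm_bad
          · left; exact lt_of_le_of_ne hle hm_ne
        ext x
        simp only [Set.mem_inter_iff, Set.mem_empty_iff_false, iff_false, not_and]
        intro hx1 hx2
        have h1 := (hS1coord x hx1).2.2
        have h2 : x m = lo w m := hw.fixed hmα hx2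
        rcases hout with hh | hh <;> linarith [h1.1, h1.2]
      · refine disj_of_fixed hS1 hw hnm hnα ?_
        rw [hpj n hnα]
        exact fun e => hcn e.symm
    · rw [hd] at hw
      refine disj_of_fixed hS1 hw hαm hαm ?_
      rw [hpα]
      exact fun e => ht3 (e ▸ lo_mem_coordSet hw1 α)
    · rw [hd] at hw
      refine disj_of_fixed hS1 hw hαm hnα.symm ?_
      rw [hpα]
      exact fun e => ht3 (e ▸ lo_mem_coordSet hw1 α)
  · intro w hw1
    obtain ⟨dw, hw⟩ := hax w hw1
    apply not_collinear hS1 hw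
    by_cases hdm : dw = m
    · refine Or.inr ⟨α, hαm, ?_⟩
      rw [hpα]
      exact fun e => ht3 (e ▸ lo_mem_coordSet hw1 α)
    · exact Or.inl fun e => hdm e.symm

end SegAux
namespace SegAux

variable {V : Type*}

/-- Add a segment far away from all segments of `s'`. -/
lemma extend_free (s' : Finset V) (lo hi : V → Pt)
    (hax : ∀ v ∈ s', ∃ d, AxSeg (lo v) (hi v) d) :
    ∃ (l h : Pt) (d : Fin 3),
      AxSeg l h d ∧
      (∀ w ∈ s', Set.Icc l h ∩ Set.Icc (lo w) (hi w) = ∅) ∧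
      (∀ w ∈ s', ¬ Collinear ℝ (Set.Icc l h ∪ Set.Icc (lo w) (hi w))) := by
  classical
  have hbadfin := coordSet_finite s' lo hi
  obtain ⟨ub, hub⟩ := hbadfin.bddAbove
  set r : ℝ := ub + 1 with hr
  have hrb : ∀ b ∈ coordSet s' lo hi, b < r := by
    intro b hb
    have := hub hb
    simp only [hr]
    linarith [this]
  set l : Pt := fun _ => r with hl_def
  set h : Pt := Function.update l 0 (r + 1) with hh_def
  have hS : AxSeg l h (0 : Fin 3) := by
    constructor
    · simp [hl_def, hh_def]
    · intro j hj; simp [hl_def, hh_def, Function.update_of_ne hj]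
  have hlj : ∀ j : Fin 3, l j = r := fun j => rfl
  refine ⟨l, h, 0, hS, ?_, ?_⟩
  · intro w hw1
    obtain ⟨dw, hw⟩ := hax w hw1
    obtain ⟨j, hj0, hjd⟩ := exists_third 0 dw
    refine disj_of_fixed hS hw hj0 hjd ?_
    rw [hlj j]
    have := hrb (lo w j) (lo_mem_coordSet hw1 j)
    linarith
  · intro w hw1
    obtain ⟨dw, hw⟩ := hax w hw1
    apply not_collinear hS hw
    by_cases hd : dw = 0
    · subst hd
      obtain ⟨j, hj0, -⟩ := exists_third 0 0
      refine Or.inr ⟨j, hj0, ?_⟩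
      rw [hlj j]
      have := hrb (lo w j) (lo_mem_coordSet hw1 j)
      linarith
    · exact Or.inl fun e => hd e.symm

end SegAux
namespace SegAux

/-- segment between two points (componentwise min/max) -/
noncomputable def sLo (P Q : Pt) : Pt := fun j => min (P j) (Q j)
noncomputable def sHi (P Q : Pt) : Pt := fun j => max (P j) (Q j)

lemma axseg_two {P Q : Pt} {d : Fin 3} (hPQ : ∀ j, j ≠ d → P j = Q j) (hd : P d ≠ Q d) :
    AxSeg (sLo P Q) (sHi P Q) d := by
  constructor
  · exact min_lt_max.mpr hd
  · intro j hj
    simp [sLo, sHi, hPQ j hj]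

lemma mem_two_left (P Q : Pt) : P ∈ Set.Icc (sLo P Q) (sHi P Q) := by
  rw [mem_Icc']
  exact fun j => ⟨min_le_left _ _, le_max_left _ _⟩

lemma mem_two_right (P Q : Pt) : Q ∈ Set.Icc (sLo P Q) (sHi P Q) := by
  rw [mem_Icc']
  exact fun j => ⟨min_le_right _ _, le_max_right _ _⟩

lemma sLo_eq {P Q : Pt} {j d : Fin 3} (hPQ : ∀ k, k ≠ d → P k = Q k) (hj : j ≠ d) :
    sLo P Q j = P j := by
  simp [sLo, hPQ j hj]

lemma two_range {P Q : Pt} {x : Pt} (hx : x ∈ Set.Icc (sLo P Q) (sHi P Q)) (d : Fin 3) :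
    min (P d) (Q d) ≤ x d ∧ x d ≤ max (P d) (Q d) := by
  rw [mem_Icc'] at hx
  exact hx d

lemma left_not_relint {P Q : Pt} {d : Fin 3} (h : AxSeg (sLo P Q) (sHi P Q) d) :
    P ∉ segRelInt (sLo P Q) (sHi P Q) := by
  apply endpoint_not_mem_relint h
  rcases le_total (P d) (Q d) with hle | hle
  · exact Or.inl (min_eq_left hle).symm
  · exact Or.inr (max_eq_left hle).symm

lemma right_not_relint {P Q : Pt} {d : Fin 3} (h : AxSeg (sLo P Q) (sHi P Q) d) :
    Q ∉ segRelInt (sLo P Q) (sHi P Q) := by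
  apply endpoint_not_mem_relint h
  rcases le_total (P d) (Q d) with hle | hle
  · exact Or.inr (max_eq_right hle).symm
  · exact Or.inl (min_eq_right hle).symm

/-- Key "coplanar" disjointness: a short escape segment avoids segments parallel to
its host, using that the escape length avoids all coordinate gaps. -/
lemma coplanar_kill {lou hiu loq hiq l h : Pt} {α m n dS : Fin 3}
    (hU : AxSeg lou hiu α) (hQ : AxSeg loq hiq α) (hS : AxSeg l h dS)
    (hmα : m ≠ α) (hnα : n ≠ α) (hnm : n ≠ m) (hnd : n ≠ dS)
    {bad : Set ℝ} {g : ℝ}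
    (hqm : loq m ∈ bad)
    (hg2 : ∀ x, lou m < x → x ≤ g → x ∉ bad)
    (hSn : l n = lou n)
    (hSm : ∀ x ∈ Set.Icc l h, lou m ≤ x m ∧ x m ≤ g)
    (hnc : ¬ Collinear ℝ (Set.Icc lou hiu ∪ Set.Icc loq hiq)) :
    Set.Icc l h ∩ Set.Icc loq hiq = ∅ := by
  by_cases hqn : loq n = lou n
  · have hm_ne : lou m ≠ loq m := by
      obtain ⟨j, hjα, hjne⟩ := exists_ne_coord_of_not_collinear hU hQ hnc
      rcases fin3_cases α m n j hmα hnα hnm with rfl | rfl | rfl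
      · exact absurd rfl hjα
      · exact hjne
      · exact absurd hqn.symm hjne
    have hout : loq m < lou m ∨ g < loq m := by
      rcases lt_or_ge (lou m) (loq m) with hlt | hle
      · right
        by_contra hle2
        push_neg at hle2
        exact hg2 (loq m) hlt hle2 hqm
      · left; exact lt_of_le_of_ne hle fun e => hm_ne e.symm
    ext x
    simp only [Set.mem_inter_iff, Set.mem_empty_iff_false, iff_false, not_and]
    intro hx1 hx2
    have h1 := hSm x hx1
    have h2 : x m = loq m := hQ.fixed hmα hx2
    rcases hout with hh | hh <;> linarith [h1.1, h1.2]
  · refine disj_of_fixed hS hQ hnd hnα ?_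
    rw [hSn]
    exact fun e => hqn e.symm

end SegAux
namespace SegAux

variable {V : Type*}

set_option maxHeartbeats 1000000 in
/-- Add a 5-segment staircase joining the segments of `u` and `w`,
avoiding all other segments of `s'`. -/
lemma extend_path (s' : Finset V) (lo hi : V → Pt)
    (hax : ∀ v ∈ s', ∃ d, AxSeg (lo v) (hi v) d)
    (hnc : ∀ a ∈ s', ∀ b ∈ s', a ≠ b →
      ¬ Collinear ℝ (Set.Icc (lo a) (hi a) ∪ Set.Icc (lo b) (hi b)))
    {u w : V} (hu : u ∈ s') (hw : w ∈ s') (huw : u ≠ w) :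
    ∃ (L₁ H₁ L₂ H₂ L₃ H₃ L₄ H₄ L₅ H₅ P₀ P₁ P₂ P₃ P₄ P₅ : Pt) (d₁ d₂ d₃ d₄ d₅ : Fin 3),
      AxSeg L₁ H₁ d₁ ∧ AxSeg L₂ H₂ d₂ ∧ AxSeg L₃ H₃ d₃ ∧ AxSeg L₄ H₄ d₄ ∧ AxSeg L₅ H₅ d₅ ∧
      (Set.Icc L₁ H₁ ∩ Set.Icc (lo u) (hi u) = {P₀}) ∧
      (Set.Icc L₁ H₁ ∩ Set.Icc L₂ H₂ = {P₁}) ∧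
      (Set.Icc L₂ H₂ ∩ Set.Icc L₃ H₃ = {P₂}) ∧
      (Set.Icc L₃ H₃ ∩ Set.Icc L₄ H₄ = {P₃}) ∧
      (Set.Icc L₄ H₄ ∩ Set.Icc L₅ H₅ = {P₄}) ∧
      (Set.Icc L₅ H₅ ∩ Set.Icc (lo w) (hi w) = {P₅}) ∧
      Disjoint (segRelInt L₁ H₁) (segRelInt (lo u) (hi u)) ∧
      Disjoint (segRelInt L₁ H₁) (segRelInt L₂ H₂) ∧
      Disjoint (segRelInt L₂ H₂) (segRelInt L₃ H₃) ∧
      Disjoint (segRelInt L₃ H₃) (segRelInt L₄ H₄) ∧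
      Disjoint (segRelInt L₄ H₄) (segRelInt L₅ H₅) ∧
      Disjoint (segRelInt L₅ H₅) (segRelInt (lo w) (hi w)) ∧
      (Set.Icc L₂ H₂ ∩ Set.Icc (lo u) (hi u) = ∅) ∧
      (Set.Icc L₃ H₃ ∩ Set.Icc (lo u) (hi u) = ∅) ∧
      (Set.Icc L₄ H₄ ∩ Set.Icc (lo u) (hi u) = ∅) ∧
      (Set.Icc L₅ H₅ ∩ Set.Icc (lo u) (hi u) = ∅) ∧
      (Set.Icc L₁ H₁ ∩ Set.Icc (lo w) (hi w) = ∅) ∧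
      (Set.Icc L₂ H₂ ∩ Set.Icc (lo w) (hi w) = ∅) ∧
      (Set.Icc L₃ H₃ ∩ Set.Icc (lo w) (hi w) = ∅) ∧
      (Set.Icc L₄ H₄ ∩ Set.Icc (lo w) (hi w) = ∅) ∧
      (Set.Icc L₁ H₁ ∩ Set.Icc L₃ H₃ = ∅) ∧
      (Set.Icc L₁ H₁ ∩ Set.Icc L₄ H₄ = ∅) ∧
      (Set.Icc L₁ H₁ ∩ Set.Icc L₅ H₅ = ∅) ∧
      (Set.Icc L₂ H₂ ∩ Set.Icc L₄ H₄ = ∅) ∧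
      (Set.Icc L₂ H₂ ∩ Set.Icc L₅ H₅ = ∅) ∧
      (Set.Icc L₃ H₃ ∩ Set.Icc L₅ H₅ = ∅) ∧
      (∀ Q ∈ s', Q ≠ u → Q ≠ w →
        Set.Icc L₁ H₁ ∩ Set.Icc (lo Q) (hi Q) = ∅ ∧
        Set.Icc L₂ H₂ ∩ Set.Icc (lo Q) (hi Q) = ∅ ∧
        Set.Icc L₃ H₃ ∩ Set.Icc (lo Q) (hi Q) = ∅ ∧
        Set.Icc L₄ H₄ ∩ Set.Icc (lo Q) (hi Q) = ∅ ∧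
        Set.Icc L₅ H₅ ∩ Set.Icc (lo Q) (hi Q) = ∅) ∧
      (∀ Q ∈ s',
        ¬ Collinear ℝ (Set.Icc L₁ H₁ ∪ Set.Icc (lo Q) (hi Q)) ∧
        ¬ Collinear ℝ (Set.Icc L₂ H₂ ∪ Set.Icc (lo Q) (hi Q)) ∧
        ¬ Collinear ℝ (Set.Icc L₃ H₃ ∪ Set.Icc (lo Q) (hi Q)) ∧
        ¬ Collinear ℝ (Set.Icc L₄ H₄ ∪ Set.Icc (lo Q) (hi Q)) ∧
        ¬ Collinear ℝ (Set.Icc L₅ H₅ ∪ Set.Icc (lo Q) (hi Q))) ∧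
      ¬ Collinear ℝ (Set.Icc L₁ H₁ ∪ Set.Icc L₂ H₂) ∧
      ¬ Collinear ℝ (Set.Icc L₁ H₁ ∪ Set.Icc L₃ H₃) ∧
      ¬ Collinear ℝ (Set.Icc L₁ H₁ ∪ Set.Icc L₄ H₄) ∧
      ¬ Collinear ℝ (Set.Icc L₁ H₁ ∪ Set.Icc L₅ H₅) ∧
      ¬ Collinear ℝ (Set.Icc L₂ H₂ ∪ Set.Icc L₃ H₃) ∧
      ¬ Collinear ℝ (Set.Icc L₂ H₂ ∪ Set.Icc L₄ H₄) ∧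
      ¬ Collinear ℝ (Set.Icc L₂ H₂ ∪ Set.Icc L₅ H₅) ∧
      ¬ Collinear ℝ (Set.Icc L₃ H₃ ∪ Set.Icc L₄ H₄) ∧
      ¬ Collinear ℝ (Set.Icc L₃ H₃ ∪ Set.Icc L₅ H₅) ∧
      ¬ Collinear ℝ (Set.Icc L₄ H₄ ∪ Set.Icc L₅ H₅) := by
  classical
  obtain ⟨α, hU⟩ := hax u hu
  obtain ⟨α', hW⟩ := hax w hw
  obtain ⟨n, hnα, -⟩ := exists_third α α
  obtain ⟨n', hn'α', hn'n⟩ := exists_third α' n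
  obtain ⟨m, hmα, hmn⟩ := exists_third α n
  obtain ⟨m', hm'α', hm'n'⟩ := exists_third α' n'
  obtain ⟨c, hcn, hcn'⟩ := exists_third n n'
  set bad := coordSet s' lo hi with hbad_def
  have hbf := coordSet_finite s' lo hi
  have hbadU : ∀ j, lo u j ∈ bad := fun j => lo_mem_coordSet hu j
  have hbadW : ∀ j, lo w j ∈ bad := fun j => lo_mem_coordSet hw j
  obtain ⟨t, htl, htr, htb⟩ := exists_gen hU.1 bad hbf
  obtain ⟨t', ht'l, ht'r, ht'b0⟩ :=
    exists_gen hW.1 (bad ∪ {t}) (hbf.union (Set.finite_singleton t))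
  have ht'b : t' ∉ bad := fun hh => ht'b0 (Or.inl hh)
  have ht't : t' ≠ t := fun hh => ht'b0 (Or.inr hh)
  obtain ⟨g₂, hg₂l, hg₂p⟩ :=
    exists_close (lo u m) (bad ∪ {t, t'})
      (hbf.union ((Set.finite_singleton t').insert t))
  have hg₂b : g₂ ∉ bad := fun hh => hg₂p g₂ hg₂l le_rfl (Or.inl hh)
  have hg₂t : g₂ ≠ t := fun hh => hg₂p g₂ hg₂l le_rfl (Or.inr (Or.inl hh))
  have hg₂t' : g₂ ≠ t' := fun hh => hg₂p g₂ hg₂l le_rfl (Or.inr (Or.inr hh))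
  have hg₂bad : ∀ x, lo u m < x → x ≤ g₂ → x ∉ bad :=
    fun x h1 h2 hb => hg₂p x h1 h2 (Or.inl hb)
  obtain ⟨g₄, hg₄l, hg₄p⟩ :=
    exists_close (lo w m') (bad ∪ {t, t', g₂})
      (hbf.union (((Set.finite_singleton g₂).insert t').insert t))
  have hg₄b : g₄ ∉ bad := fun hh => hg₄p g₄ hg₄l le_rfl (Or.inl hh)
  have hg₄t : g₄ ≠ t := fun hh => hg₄p g₄ hg₄l le_rfl (Or.inr (Or.inl hh))
  have hg₄t' : g₄ ≠ t' := fun hh => hg₄p g₄ hg₄l le_rfl (Or.inr (Or.inr (Or.inl hh)))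
  have hg₄g₂ : g₄ ≠ g₂ := fun hh => hg₄p g₄ hg₄l le_rfl (Or.inr (Or.inr (Or.inr hh)))
  have hg₄bad : ∀ x, lo w m' < x → x ≤ g₄ → x ∉ bad :=
    fun x h1 h2 hb => hg₄p x h1 h2 (Or.inl hb)
  -- the six corner points
  set p : Pt := Function.update (lo u) α t with hp_def
  set A : Pt := Function.update p m g₂ with hA_def
  set gB : ℝ := if n = α' then t' else g₄ with hgB_def
  set B : Pt := Function.update A n gB with hB_def
  set q : Pt := Function.update (lo w) α' t' with hq_def
  set D : Pt := Function.update q m' g₄ with hD_def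
  set gB' : ℝ := if n' = α then t else g₂ with hgB'_def
  set C : Pt := Function.update D n' gB' with hC_def
  -- coordinate facts
  have hpα : p α = t := Function.update_self α t (lo u)
  have hp : ∀ j, j ≠ α → p j = lo u j := fun j hj => Function.update_of_ne hj t (lo u)
  have hAm : A m = g₂ := Function.update_self m g₂ p
  have hA : ∀ j, j ≠ m → A j = p j := fun j hj => Function.update_of_ne hj g₂ p
  have hAα : A α = t := by rw [hA α (fun e => hmα e.symm), hpα]
  have hAn : A n = lo u n := by rw [hA n (Ne.symm hmn), hp n hnα]
  have hBn : B n = gB := Function.update_self n gB A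
  have hB : ∀ j, j ≠ n → B j = A j := fun j hj => Function.update_of_ne hj gB A
  have hBα : B α = t := by rw [hB α (fun e => hnα e.symm), hAα]
  have hBm : B m = g₂ := by rw [hB m hmn, hAm]
  have hqα' : q α' = t' := Function.update_self α' t' (lo w)
  have hq : ∀ j, j ≠ α' → q j = lo w j := fun j hj => Function.update_of_ne hj t' (lo w)
  have hDm' : D m' = g₄ := Function.update_self m' g₄ q
  have hD : ∀ j, j ≠ m' → D j = q j := fun j hj => Function.update_of_ne hj g₄ q
  have hDα' : D α' = t' := by rw [hD α' (fun e => hm'α' e.symm), hqα']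
  have hDn' : D n' = lo w n' := by rw [hD n' (Ne.symm hm'n'), hq n' hn'α']
  have hCn' : C n' = gB' := Function.update_self n' gB' D
  have hC : ∀ j, j ≠ n' → C j = D j := fun j hj => Function.update_of_ne hj gB' D
  have hCα' : C α' = t' := by rw [hC α' (fun e => hn'α' e.symm), hDα']
  have hCm' : C m' = g₄ := by rw [hC m' (fun e => hm'n' e), hDm']
  -- trichotomies
  have triu : ∀ j : Fin 3, j = α ∨ j = m ∨ j = n :=
    fun j => fin3_cases α m n j hmα hnα (Ne.symm hmn)
  have triw : ∀ j : Fin 3, j = α' ∨ j = m' ∨ j = n' :=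
    fun j => fin3_cases α' m' n' j hm'α' hn'α' (Ne.symm hm'n')
  have hn_cases : n = α' ∨ n = m' := by
    rcases triw n with h | h | h
    · exact Or.inl h
    · exact Or.inr h
    · exact absurd h.symm hn'n
  have hn'_cases : n' = α ∨ n' = m := by
    rcases triu n' with h | h | h
    · exact Or.inl h
    · exact Or.inr h
    · exact absurd h hn'n
  have hc_um : c = α ∨ c = m := by
    rcases triu c with h | h | h
    · exact Or.inl h
    · exact Or.inr h
    · exact absurd h hcn
  have hc_wm : c = α' ∨ c = m' := by
    rcases triw c with h | h | h
    · exact Or.inl h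
    · exact Or.inr h
    · exact absurd h hcn'
  have hgB_cases : gB = t' ∨ gB = g₄ := by
    rw [hgB_def]
    by_cases h : n = α' <;> simp [h]
  have hgB'_cases : gB' = t ∨ gB' = g₂ := by
    rw [hgB'_def]
    by_cases h : n' = α <;> simp [h]
  have hgBb : gB ∉ bad := by rcases hgB_cases with e | e <;> rw [e] <;> assumption
  have hgB'b : gB' ∉ bad := by rcases hgB'_cases with e | e <;> rw [e] <;> assumption
  have hCn : C n = gB := by
    have h1 : C n = D n := hC n hn'n.symm
    rcases hn_cases with h | h
    · rw [hgB_def, if_pos h, h1, hD n (by rw [h]; exact Ne.symm hm'α'), h, hqα']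
    · rw [hgB_def, if_neg (by rw [h]; exact hm'α'), h1, h, hDm']
  have hBn' : B n' = gB' := by
    have h1 : B n' = A n' := hB n' hn'n
    rcases hn'_cases with h | h
    · rw [hgB'_def, if_pos h, h1, hA n' (by rw [h]; exact Ne.symm hmα), h, hpα]
    · rw [hgB'_def, if_neg (by rw [h]; exact hmα), h1, h, hAm]
  -- the five segments
  have hfix1 : ∀ j, j ≠ m → p j = A j := fun j hj => (hA j hj).symm
  have hax1 : AxSeg (sLo p A) (sHi p A) m := by
    apply axseg_two hfix1
    rw [hp m hmα, hAm]
    exact ne_of_lt hg₂l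
  have hfix2 : ∀ j, j ≠ n → A j = B j := fun j hj => (hB j hj).symm
  have hax2 : AxSeg (sLo A B) (sHi A B) n := by
    apply axseg_two hfix2
    rw [hAn, hBn]
    exact fun e => hgBb (e ▸ hbadU n)
  have hfix3 : ∀ j, j ≠ c → B j = C j := by
    intro j hj
    rcases fin3_cases c n n' j (Ne.symm hcn) (Ne.symm hcn') hn'n with h | h | h
    · exact absurd h hj
    · rw [h, hBn, hCn]
    · rw [h, hBn', hCn']
  have hBc : B c = t ∨ B c = g₂ := by
    rcases hc_um with h | h
    · rw [h, hBα]; exact Or.inl rfl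
    · rw [h, hBm]; exact Or.inr rfl
  have hCc : C c = t' ∨ C c = g₄ := by
    rcases hc_wm with h | h
    · rw [h, hCα']; exact Or.inl rfl
    · rw [h, hCm']; exact Or.inr rfl
  have hBCc : B c ≠ C c := by
    rcases hBc with e | e <;> rcases hCc with e' | e' <;> rw [e, e']
    · exact Ne.symm ht't
    · exact Ne.symm hg₄t
    · exact Ne.symm (Ne.symm hg₂t')
    · exact Ne.symm hg₄g₂
  have hax3 : AxSeg (sLo B C) (sHi B C) c := axseg_two hfix3 hBCc
  have hfix4 : ∀ j, j ≠ n' → C j = D j := hC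
  have hax4 : AxSeg (sLo C D) (sHi C D) n' := by
    apply axseg_two hfix4
    rw [hCn', hDn']
    exact fun e => hgB'b (e ▸ hbadW n')
  have hfix5 : ∀ j, j ≠ m' → q j = D j := fun j hj => (hD j hj).symm
  have hax5 : AxSeg (sLo q D) (sHi q D) m' := by
    apply axseg_two hfix5
    rw [hq m' hm'α', hDm']
    exact ne_of_lt hg₄l
  -- lo coordinates of the segments on their fixed axes
  have hL1 : ∀ j, j ≠ m → sLo p A j = p j := fun j hj => sLo_eq hfix1 hj
  have hL2 : ∀ j, j ≠ n → sLo A B j = A j := fun j hj => sLo_eq hfix2 hj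
  have hL3 : ∀ j, j ≠ c → sLo B C j = B j := fun j hj => sLo_eq hfix3 hj
  have hL4 : ∀ j, j ≠ n' → sLo C D j = C j := fun j hj => sLo_eq hfix4 hj
  have hL5 : ∀ j, j ≠ m' → sLo q D j = q j := fun j hj => sLo_eq hfix5 hj
  -- membership of the corner points in the host segments
  have hpu : p ∈ Set.Icc (lo u) (hi u) := by
    rw [mem_Icc']
    intro j
    by_cases hj : j = α
    · subst hj; rw [hpα]; exact ⟨le_of_lt htl, le_of_lt htr⟩
    · rw [hp j hj, ← hU.2 j hj]; exact ⟨le_refl _, le_refl _⟩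
  have hqw : q ∈ Set.Icc (lo w) (hi w) := by
    rw [mem_Icc']
    intro j
    by_cases hj : j = α'
    · subst hj; rw [hqα']; exact ⟨le_of_lt ht'l, le_of_lt ht'r⟩
    · rw [hq j hj, ← hW.2 j hj]; exact ⟨le_refl _, le_refl _⟩
  -- ranges on the moving axes of L1 and L5
  have hS1range : ∀ x ∈ Set.Icc (sLo p A) (sHi p A), lo u m ≤ x m ∧ x m ≤ g₂ := by
    intro x hx
    have := two_range hx m
    rw [hp m hmα, hAm, min_eq_left (le_of_lt hg₂l), max_eq_right (le_of_lt hg₂l)] at this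
    exact this
  have hS5range : ∀ x ∈ Set.Icc (sLo q D) (sHi q D), lo w m' ≤ x m' ∧ x m' ≤ g₄ := by
    intro x hx
    have := two_range hx m'
    rw [hq m' hm'α', hDm', min_eq_left (le_of_lt hg₄l), max_eq_right (le_of_lt hg₄l)] at this
    exact this
  have tri3 : ∀ j : Fin 3, j = c ∨ j = n ∨ j = n' :=
    fun j => fin3_cases c n n' j (Ne.symm hcn) (Ne.symm hcn') hn'n
  -- the six touching points
  have hsing0 : Set.Icc (sLo p A) (sHi p A) ∩ Set.Icc (lo u) (hi u) = {p} :=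
    inter_singleton hax1 hU hmα (mem_two_left p A) hpu
  have hsing1 : Set.Icc (sLo p A) (sHi p A) ∩ Set.Icc (sLo A B) (sHi A B) = {A} :=
    inter_singleton hax1 hax2 hmn (mem_two_right p A) (mem_two_left A B)
  have hsing2 : Set.Icc (sLo A B) (sHi A B) ∩ Set.Icc (sLo B C) (sHi B C) = {B} :=
    inter_singleton hax2 hax3 (Ne.symm hcn) (mem_two_right A B) (mem_two_left B C)
  have hsing3 : Set.Icc (sLo B C) (sHi B C) ∩ Set.Icc (sLo C D) (sHi C D) = {C} :=
    inter_singleton hax3 hax4 hcn' (mem_two_right B C) (mem_two_left C D)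
  have hsing4 : Set.Icc (sLo C D) (sHi C D) ∩ Set.Icc (sLo q D) (sHi q D) = {D} :=
    inter_singleton hax4 hax5 (Ne.symm hm'n') (mem_two_right C D) (mem_two_right q D)
  have hsing5 : Set.Icc (sLo q D) (sHi q D) ∩ Set.Icc (lo w) (hi w) = {q} :=
    inter_singleton hax5 hW hm'α' (mem_two_left q D) hqw
  -- empties vs u
  have hE2u : Set.Icc (sLo A B) (sHi A B) ∩ Set.Icc (lo u) (hi u) = ∅ := by
    refine disj_of_fixed hax2 hU hmn hmα ?_
    rw [hL2 m hmn, hAm]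
    exact ne_of_gt hg₂l
  have hE3u : Set.Icc (sLo B C) (sHi B C) ∩ Set.Icc (lo u) (hi u) = ∅ := by
    refine disj_of_fixed hax3 hU (Ne.symm hcn) hnα ?_
    rw [hL3 n (Ne.symm hcn), hBn]
    exact fun e => hgBb (e ▸ hbadU n)
  have hE4u : Set.Icc (sLo C D) (sHi C D) ∩ Set.Icc (lo u) (hi u) = ∅ := by
    obtain ⟨j, hjn', hjα⟩ := exists_third n' α
    refine disj_of_fixed hax4 hU hjn' hjα ?_
    rw [hL4 j hjn']
    have hv : C j = t' ∨ C j = g₄ := by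
      rcases triw j with h | h | h
      · rw [h, hCα']; exact Or.inl rfl
      · rw [h, hCm']; exact Or.inr rfl
      · exact absurd h hjn'
    rcases hv with e | e <;> rw [e]
    · exact fun e' => ht'b (e' ▸ hbadU j)
    · exact fun e' => hg₄b (e' ▸ hbadU j)
  have hE5u : Set.Icc (sLo q D) (sHi q D) ∩ Set.Icc (lo u) (hi u) = ∅ := by
    by_cases hαα' : α' = α
    · refine coplanar_kill hW (by rw [hαα']; exact hU) hax5 hm'α' hn'α' (Ne.symm hm'n')
        (Ne.symm hm'n') (hbadU m') hg₄bad ?_ hS5range (hnc w hw u hu (Ne.symm huw))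
      rw [hL5 n' (Ne.symm hm'n'), hq n' hn'α']
    · refine disj_of_fixed hax5 hU (Ne.symm hm'α') hαα' ?_
      rw [hL5 α' (Ne.symm hm'α'), hqα']
      exact fun e => ht'b (e ▸ hbadU α')
  -- empties vs w
  have hE1w : Set.Icc (sLo p A) (sHi p A) ∩ Set.Icc (lo w) (hi w) = ∅ := by
    by_cases hαα' : α = α'
    · refine coplanar_kill hU (by rw [hαα']; exact hW) hax1 hmα hnα (Ne.symm hmn)
        (Ne.symm hmn) (hbadW m) hg₂bad ?_ hS1range (hnc u hu w hw huw)
      rw [hL1 n (Ne.symm hmn), hp n hnα]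
    · refine disj_of_fixed hax1 hW (Ne.symm hmα) hαα' ?_
      rw [hL1 α (Ne.symm hmα), hpα]
      exact fun e => htb (e ▸ hbadW α)
  have hE2w : Set.Icc (sLo A B) (sHi A B) ∩ Set.Icc (lo w) (hi w) = ∅ := by
    by_cases hαα' : α = α'
    · refine disj_of_fixed hax2 hW hmn (by rw [← hαα']; exact hmα) ?_
      rw [hL2 m hmn, hAm]
      exact fun e => hg₂b (e ▸ hbadW m)
    · refine disj_of_fixed hax2 hW (Ne.symm hnα) hαα' ?_
      rw [hL2 α (Ne.symm hnα), hAα]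
      exact fun e => htb (e ▸ hbadW α)
  have hE3w : Set.Icc (sLo B C) (sHi B C) ∩ Set.Icc (lo w) (hi w) = ∅ := by
    refine disj_of_fixed hax3 hW (Ne.symm hcn') hn'α' ?_
    rw [hL3 n' (Ne.symm hcn'), hBn']
    rcases hgB'_cases with e | e <;> rw [e]
    · exact fun e' => htb (e' ▸ hbadW n')
    · exact fun e' => hg₂b (e' ▸ hbadW n')
  have hE4w : Set.Icc (sLo C D) (sHi C D) ∩ Set.Icc (lo w) (hi w) = ∅ := by
    refine disj_of_fixed hax4 hW hm'n' hm'α' ?_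
    rw [hL4 m' hm'n', hCm']
    exact ne_of_gt hg₄l
  -- empties among the new segments
  have hE13 : Set.Icc (sLo p A) (sHi p A) ∩ Set.Icc (sLo B C) (sHi B C) = ∅ := by
    refine disj_of_fixed hax1 hax3 (Ne.symm hmn) (Ne.symm hcn) ?_
    rw [hL1 n (Ne.symm hmn), hp n hnα, hL3 n (Ne.symm hcn), hBn]
    exact fun e => hgBb (e ▸ hbadU n)
  have hE14 : Set.Icc (sLo p A) (sHi p A) ∩ Set.Icc (sLo C D) (sHi C D) = ∅ := by
    obtain ⟨j, hjm, hjn'⟩ := exists_third m n'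
    refine disj_of_fixed hax1 hax4 hjm hjn' ?_
    rw [hL1 j hjm, hL4 j hjn']
    have hv1 : p j = t ∨ p j = lo u n := by
      rcases triu j with h | h | h
      · rw [h, hpα]; exact Or.inl rfl
      · exact absurd h hjm
      · rw [h, hp n hnα]; exact Or.inr rfl
    have hv2 : C j = t' ∨ C j = g₄ := by
      rcases triw j with h | h | h
      · rw [h, hCα']; exact Or.inl rfl
      · rw [h, hCm']; exact Or.inr rfl
      · exact absurd h hjn'
    rcases hv1 with e1 | e1 <;> rcases hv2 with e2 | e2 <;> rw [e1, e2]
    · exact Ne.symm ht't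
    · exact Ne.symm hg₄t
    · exact fun e => ht'b (e ▸ hbadU n)
    · exact fun e => hg₄b (e ▸ hbadU n)
  have hE15 : Set.Icc (sLo p A) (sHi p A) ∩ Set.Icc (sLo q D) (sHi q D) = ∅ := by
    obtain ⟨j, hjm, hjm'⟩ := exists_third m m'
    refine disj_of_fixed hax1 hax5 hjm hjm' ?_
    rw [hL1 j hjm, hL5 j hjm']
    rcases triu j with h1 | h1 | h1
    · rcases triw j with h2 | h2 | h2
      · have e1 : p j = t := by rw [h1, hpα]
        have e2 : q j = t' := by rw [h2, hqα']
        rw [e1, e2]; exact Ne.symm ht't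
      · exact absurd h2 hjm'
      · have e1 : p j = t := by rw [h1, hpα]
        have e2 : q j = lo w n' := by rw [h2, hq n' hn'α']
        rw [e1, e2]
        exact fun e => htb (e ▸ hbadW n')
    · exact absurd h1 hjm
    · rcases triw j with h2 | h2 | h2
      · have e1 : p j = lo u n := by rw [h1, hp n hnα]
        have e2 : q j = t' := by rw [h2, hqα']
        rw [e1, e2]
        exact fun e => ht'b (e ▸ hbadU n)
      · exact absurd h2 hjm'
      · exact absurd (h1.symm.trans h2) (Ne.symm hn'n)
  have hE24 : Set.Icc (sLo A B) (sHi A B) ∩ Set.Icc (sLo C D) (sHi C D) = ∅ := by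
    refine disj_of_fixed hax2 hax4 hcn hcn' ?_
    rw [hL2 c hcn, hL4 c hcn']
    rcases hBc with e1 | e1
    · have : A c = t := by
        rcases hc_um with h | h
        · rw [h, hAα]
        · rw [h] at e1 ⊢; rw [hBm] at e1; rw [hAm]; exact e1
      rw [this]
      rcases hCc with e2 | e2 <;> rw [e2]
      · exact Ne.symm ht't
      · exact Ne.symm hg₄t
    · have : A c = g₂ := by
        rcases hc_um with h | h
        · rw [h] at e1 ⊢; rw [hBα] at e1; rw [hAα]; exact e1
        · rw [h, hAm]
      rw [this]
      rcases hCc with e2 | e2 <;> rw [e2]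
      · exact hg₂t'
      · exact Ne.symm hg₄g₂
  have hE25 : Set.Icc (sLo A B) (sHi A B) ∩ Set.Icc (sLo q D) (sHi q D) = ∅ := by
    obtain ⟨j, hjn, hjm'⟩ := exists_third n m'
    refine disj_of_fixed hax2 hax5 hjn hjm' ?_
    rw [hL2 j hjn, hL5 j hjm']
    have hv1 : A j = t ∨ A j = g₂ := by
      rcases triu j with h | h | h
      · rw [h, hAα]; exact Or.inl rfl
      · rw [h, hAm]; exact Or.inr rfl
      · exact absurd h hjn
    have hv2 : q j = t' ∨ q j = lo w n' := by
      rcases triw j with h | h | h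
      · rw [h, hqα']; exact Or.inl rfl
      · exact absurd h hjm'
      · rw [h, hq n' hn'α']; exact Or.inr rfl
    rcases hv1 with e1 | e1 <;> rcases hv2 with e2 | e2 <;> rw [e1, e2]
    · exact Ne.symm ht't
    · exact fun e => htb (e ▸ hbadW n')
    · exact hg₂t'
    · exact fun e => hg₂b (e ▸ hbadW n')
  have hE35 : Set.Icc (sLo B C) (sHi B C) ∩ Set.Icc (sLo q D) (sHi q D) = ∅ := by
    refine disj_of_fixed hax3 hax5 (Ne.symm hcn') (Ne.symm hm'n') ?_
    rw [hL3 n' (Ne.symm hcn'), hBn', hL5 n' (Ne.symm hm'n'), hq n' hn'α']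
    rcases hgB'_cases with e | e <;> rw [e]
    · exact fun e' => htb (e' ▸ hbadW n')
    · exact fun e' => hg₂b (e' ▸ hbadW n')
  -- segments avoid all other old segments
  have hEQ : ∀ Q ∈ s', Q ≠ u → Q ≠ w →
      Set.Icc (sLo p A) (sHi p A) ∩ Set.Icc (lo Q) (hi Q) = ∅ ∧
      Set.Icc (sLo A B) (sHi A B) ∩ Set.Icc (lo Q) (hi Q) = ∅ ∧
      Set.Icc (sLo B C) (sHi B C) ∩ Set.Icc (lo Q) (hi Q) = ∅ ∧
      Set.Icc (sLo C D) (sHi C D) ∩ Set.Icc (lo Q) (hi Q) = ∅ ∧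
      Set.Icc (sLo q D) (sHi q D) ∩ Set.Icc (lo Q) (hi Q) = ∅ := by
    intro Q hQs hQu hQw
    obtain ⟨dQ, hQ⟩ := hax Q hQs
    have hbadQ : ∀ j, lo Q j ∈ bad := fun j => lo_mem_coordSet hQs j
    refine ⟨?_, ?_, ?_, ?_, ?_⟩
    · rcases triu dQ with h | h | h
      · rw [h] at hQ
        refine coplanar_kill hU hQ hax1 hmα hnα (Ne.symm hmn) (Ne.symm hmn)
          (hbadQ m) hg₂bad ?_ hS1range (hnc u hu Q hQs (Ne.symm hQu))
        rw [hL1 n (Ne.symm hmn), hp n hnα]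
      · rw [h] at hQ
        refine disj_of_fixed hax1 hQ (Ne.symm hmα) (Ne.symm hmα) ?_
        rw [hL1 α (Ne.symm hmα), hpα]
        exact fun e => htb (e ▸ hbadQ α)
      · rw [h] at hQ
        refine disj_of_fixed hax1 hQ (Ne.symm hmα) (Ne.symm hnα) ?_
        rw [hL1 α (Ne.symm hmα), hpα]
        exact fun e => htb (e ▸ hbadQ α)
    · rcases triu dQ with h | h | h
      · rw [h] at hQ
        refine disj_of_fixed hax2 hQ hmn hmα ?_
        rw [hL2 m hmn, hAm]
        exact fun e => hg₂b (e ▸ hbadQ m)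
      · rw [h] at hQ
        refine disj_of_fixed hax2 hQ (Ne.symm hnα) (Ne.symm hmα) ?_
        rw [hL2 α (Ne.symm hnα), hAα]
        exact fun e => htb (e ▸ hbadQ α)
      · rw [h] at hQ
        refine disj_of_fixed hax2 hQ (Ne.symm hnα) (Ne.symm hnα) ?_
        rw [hL2 α (Ne.symm hnα), hAα]
        exact fun e => htb (e ▸ hbadQ α)
    · rcases tri3 dQ with h | h | h
      · rw [h] at hQ
        refine disj_of_fixed hax3 hQ (Ne.symm hcn) (Ne.symm hcn) ?_
        rw [hL3 n (Ne.symm hcn), hBn]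
        exact fun e => hgBb (e ▸ hbadQ n)
      · rw [h] at hQ
        refine disj_of_fixed hax3 hQ (Ne.symm hcn') hn'n ?_
        rw [hL3 n' (Ne.symm hcn'), hBn']
        rcases hgB'_cases with e | e <;> rw [e]
        · exact fun e' => htb (e' ▸ hbadQ n')
        · exact fun e' => hg₂b (e' ▸ hbadQ n')
      · rw [h] at hQ
        refine disj_of_fixed hax3 hQ (Ne.symm hcn) (Ne.symm hn'n) ?_
        rw [hL3 n (Ne.symm hcn), hBn]
        exact fun e => hgBb (e ▸ hbadQ n)
    · rcases triw dQ with h | h | h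
      · rw [h] at hQ
        refine disj_of_fixed hax4 hQ hm'n' hm'α' ?_
        rw [hL4 m' hm'n', hCm']
        exact fun e => hg₄b (e ▸ hbadQ m')
      · rw [h] at hQ
        refine disj_of_fixed hax4 hQ (Ne.symm hn'α') (Ne.symm hm'α') ?_
        rw [hL4 α' (Ne.symm hn'α'), hCα']
        exact fun e => ht'b (e ▸ hbadQ α')
      · rw [h] at hQ
        refine disj_of_fixed hax4 hQ (Ne.symm hn'α') (Ne.symm hn'α') ?_
        rw [hL4 α' (Ne.symm hn'α'), hCα']
        exact fun e => ht'b (e ▸ hbadQ α')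
    · rcases triw dQ with h | h | h
      · rw [h] at hQ
        refine coplanar_kill hW hQ hax5 hm'α' hn'α' (Ne.symm hm'n') (Ne.symm hm'n')
          (hbadQ m') hg₄bad ?_ hS5range (hnc w hw Q hQs (Ne.symm hQw))
        rw [hL5 n' (Ne.symm hm'n'), hq n' hn'α']
      · rw [h] at hQ
        refine disj_of_fixed hax5 hQ (Ne.symm hm'α') (Ne.symm hm'α') ?_
        rw [hL5 α' (Ne.symm hm'α'), hqα']
        exact fun e => ht'b (e ▸ hbadQ α')
      · rw [h] at hQ
        refine disj_of_fixed hax5 hQ (Ne.symm hm'α') (Ne.symm hn'α') ?_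
        rw [hL5 α' (Ne.symm hm'α'), hqα']
        exact fun e => ht'b (e ▸ hbadQ α')
  -- non-collinearity with old segments
  have hNCQ : ∀ Q ∈ s',
      ¬ Collinear ℝ (Set.Icc (sLo p A) (sHi p A) ∪ Set.Icc (lo Q) (hi Q)) ∧
      ¬ Collinear ℝ (Set.Icc (sLo A B) (sHi A B) ∪ Set.Icc (lo Q) (hi Q)) ∧
      ¬ Collinear ℝ (Set.Icc (sLo B C) (sHi B C) ∪ Set.Icc (lo Q) (hi Q)) ∧
      ¬ Collinear ℝ (Set.Icc (sLo C D) (sHi C D) ∪ Set.Icc (lo Q) (hi Q)) ∧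
      ¬ Collinear ℝ (Set.Icc (sLo q D) (sHi q D) ∪ Set.Icc (lo Q) (hi Q)) := by
    intro Q hQs
    obtain ⟨dQ, hQ⟩ := hax Q hQs
    have hbadQ : ∀ j, lo Q j ∈ bad := fun j => lo_mem_coordSet hQs j
    refine ⟨not_collinear hax1 hQ ?_, not_collinear hax2 hQ ?_, not_collinear hax3 hQ ?_,
      not_collinear hax4 hQ ?_, not_collinear hax5 hQ ?_⟩
    · by_cases hd : dQ = m
      · refine Or.inr ⟨α, Ne.symm hmα, ?_⟩
        rw [hL1 α (Ne.symm hmα), hpα]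
        exact fun e => htb (e ▸ hbadQ α)
      · exact Or.inl fun e => hd e.symm
    · by_cases hd : dQ = n
      · refine Or.inr ⟨α, Ne.symm hnα, ?_⟩
        rw [hL2 α (Ne.symm hnα), hAα]
        exact fun e => htb (e ▸ hbadQ α)
      · exact Or.inl fun e => hd e.symm
    · by_cases hd : dQ = c
      · refine Or.inr ⟨n, Ne.symm hcn, ?_⟩
        rw [hL3 n (Ne.symm hcn), hBn]
        exact fun e => hgBb (e ▸ hbadQ n)
      · exact Or.inl fun e => hd e.symm
    · by_cases hd : dQ = n'
      · refine Or.inr ⟨α', Ne.symm hn'α', ?_⟩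
        rw [hL4 α' (Ne.symm hn'α'), hCα']
        exact fun e => ht'b (e ▸ hbadQ α')
      · exact Or.inl fun e => hd e.symm
    · by_cases hd : dQ = m'
      · refine Or.inr ⟨α', Ne.symm hm'α', ?_⟩
        rw [hL5 α' (Ne.symm hm'α'), hqα']
        exact fun e => ht'b (e ▸ hbadQ α')
      · exact Or.inl fun e => hd e.symm
  -- pairwise non-collinearity of the new segments
  have hq_t_or : ∀ j, j ≠ m' → (q j = t' ∨ q j = lo w n') := by
    intro j hj
    rcases triw j with h | h | h
    · rw [h, hqα']; exact Or.inl rfl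
    · exact absurd h hj
    · rw [h, hq n' hn'α']; exact Or.inr rfl
  have hNC12 : ¬ Collinear ℝ (Set.Icc (sLo p A) (sHi p A) ∪ Set.Icc (sLo A B) (sHi A B)) :=
    not_collinear hax1 hax2 (Or.inl hmn)
  have hNC13 : ¬ Collinear ℝ (Set.Icc (sLo p A) (sHi p A) ∪ Set.Icc (sLo B C) (sHi B C)) := by
    apply not_collinear hax1 hax3
    refine Or.inr ⟨n, Ne.symm hmn, ?_⟩
    rw [hL1 n (Ne.symm hmn), hp n hnα, hL3 n (Ne.symm hcn), hBn]
    exact fun e => hgBb (e ▸ hbadU n)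
  have hNC14 : ¬ Collinear ℝ (Set.Icc (sLo p A) (sHi p A) ∪ Set.Icc (sLo C D) (sHi C D)) := by
    apply not_collinear hax1 hax4
    by_cases hd : m = n'
    · refine Or.inr ⟨α, Ne.symm hmα, ?_⟩
      have hαn' : α ≠ n' := by rw [← hd]; exact Ne.symm hmα
      rw [hL1 α (Ne.symm hmα), hpα, hL4 α hαn']
      have hv : C α = t' ∨ C α = g₄ := by
        rcases triw α with h | h | h
        · rw [h, hCα']; exact Or.inl rfl
        · rw [h, hCm']; exact Or.inr rfl
        · exact absurd h hαn'
      rcases hv with e | e <;> rw [e]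
      · exact Ne.symm ht't
      · exact Ne.symm hg₄t
    · exact Or.inl hd
  have hNC15 : ¬ Collinear ℝ (Set.Icc (sLo p A) (sHi p A) ∪ Set.Icc (sLo q D) (sHi q D)) := by
    apply not_collinear hax1 hax5
    by_cases hd : m = m'
    · refine Or.inr ⟨α, Ne.symm hmα, ?_⟩
      have hαm' : α ≠ m' := by rw [← hd]; exact Ne.symm hmα
      rw [hL1 α (Ne.symm hmα), hpα, hL5 α hαm']
      rcases hq_t_or α hαm' with e | e <;> rw [e]
      · exact Ne.symm ht't
      · exact fun e' => htb (e' ▸ hbadW n')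
    · exact Or.inl hd
  have hNC23 : ¬ Collinear ℝ (Set.Icc (sLo A B) (sHi A B) ∪ Set.Icc (sLo B C) (sHi B C)) :=
    not_collinear hax2 hax3 (Or.inl (Ne.symm hcn))
  have hNC24 : ¬ Collinear ℝ (Set.Icc (sLo A B) (sHi A B) ∪ Set.Icc (sLo C D) (sHi C D)) :=
    not_collinear hax2 hax4 (Or.inl (Ne.symm hn'n))
  have hNC25 : ¬ Collinear ℝ (Set.Icc (sLo A B) (sHi A B) ∪ Set.Icc (sLo q D) (sHi q D)) := by
    apply not_collinear hax2 hax5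
    by_cases hd : n = m'
    · refine Or.inr ⟨α, Ne.symm hnα, ?_⟩
      have hαm' : α ≠ m' := by rw [← hd]; exact Ne.symm hnα
      rw [hL2 α (Ne.symm hnα), hAα, hL5 α hαm']
      rcases hq_t_or α hαm' with e | e <;> rw [e]
      · exact Ne.symm ht't
      · exact fun e' => htb (e' ▸ hbadW n')
    · exact Or.inl hd
  have hNC34 : ¬ Collinear ℝ (Set.Icc (sLo B C) (sHi B C) ∪ Set.Icc (sLo C D) (sHi C D)) :=
    not_collinear hax3 hax4 (Or.inl hcn')
  have hNC35 : ¬ Collinear ℝ (Set.Icc (sLo B C) (sHi B C) ∪ Set.Icc (sLo q D) (sHi q D)) := by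
    apply not_collinear hax3 hax5
    by_cases hd : c = m'
    · refine Or.inr ⟨n', Ne.symm hcn', ?_⟩
      rw [hL3 n' (Ne.symm hcn'), hBn', hL5 n' (Ne.symm hm'n'), hq n' hn'α']
      rcases hgB'_cases with e | e <;> rw [e]
      · exact fun e' => htb (e' ▸ hbadW n')
      · exact fun e' => hg₂b (e' ▸ hbadW n')
    · exact Or.inl hd
  have hNC45 : ¬ Collinear ℝ (Set.Icc (sLo C D) (sHi C D) ∪ Set.Icc (sLo q D) (sHi q D)) :=
    not_collinear hax4 hax5 (Or.inl (Ne.symm hm'n'))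
  exact ⟨sLo p A, sHi p A, sLo A B, sHi A B, sLo B C, sHi B C, sLo C D, sHi C D,
    sLo q D, sHi q D, p, A, B, C, D, q, m, n, c, n', m',
    hax1, hax2, hax3, hax4, hax5,
    hsing0, hsing1, hsing2, hsing3, hsing4, hsing5,
    relint_disjoint_of_inter_singleton hsing0 (Or.inl (left_not_relint hax1)),
    relint_disjoint_of_inter_singleton hsing1 (Or.inl (right_not_relint hax1)),
    relint_disjoint_of_inter_singleton hsing2 (Or.inl (right_not_relint hax2)),
    relint_disjoint_of_inter_singleton hsing3 (Or.inl (right_not_relint hax3)),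
    relint_disjoint_of_inter_singleton hsing4 (Or.inl (right_not_relint hax4)),
    relint_disjoint_of_inter_singleton hsing5 (Or.inl (left_not_relint hax5)),
    hE2u, hE3u, hE4u, hE5u, hE1w, hE2w, hE3w, hE4w,
    hE13, hE14, hE15, hE24, hE25, hE35, hEQ, hNCQ,
    hNC12, hNC13, hNC14, hNC15, hNC23, hNC24, hNC25, hNC34, hNC35, hNC45⟩

end SegAux
namespace SegAux

variable {V : Type*}

/-- all conditions for one (ordered) pair of distinct vertices -/
abbrev POK (G : SimpleGraph V) (lo hi : V → Pt) (a b : V) : Prop :=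
  (G.Adj a b ↔ (Set.Icc (lo a) (hi a) ∩ Set.Icc (lo b) (hi b)).Nonempty) ∧
  Disjoint (segRelInt (lo a) (hi a)) (segRelInt (lo b) (hi b)) ∧
  ¬ Collinear ℝ (Set.Icc (lo a) (hi a) ∪ Set.Icc (lo b) (hi b))

lemma pok_symm {G : SimpleGraph V} {lo hi : V → Pt} {a b : V}
    (h : POK G lo hi a b) : POK G lo hi b a := by
  obtain ⟨h1, h2, h3⟩ := h
  refine ⟨?_, h2.symm, ?_⟩
  · constructor
    · intro hadj
      exact (Set.inter_comm _ _) ▸ (h1.mp hadj.symm)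
    · intro hne
      exact (h1.mpr ((Set.inter_comm _ _) ▸ hne)).symm
  · rw [Set.union_comm]; exact h3

lemma pok_of_empty {G : SimpleGraph V} {lo hi : V → Pt} {a b : V}
    (hnadj : ¬ G.Adj a b)
    (hemp : Set.Icc (lo a) (hi a) ∩ Set.Icc (lo b) (hi b) = ∅)
    (hnc : ¬ Collinear ℝ (Set.Icc (lo a) (hi a) ∪ Set.Icc (lo b) (hi b))) :
    POK G lo hi a b := by
  refine ⟨?_, relint_disjoint_of_inter_empty hemp, hnc⟩
  rw [hemp]
  simp [hnadj]

lemma pok_of_single {G : SimpleGraph V} {lo hi : V → Pt} {a b : V} {z : Pt}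
    (hadj : G.Adj a b)
    (hsing : Set.Icc (lo a) (hi a) ∩ Set.Icc (lo b) (hi b) = {z})
    (hz : z ∉ segRelInt (lo a) (hi a) ∨ z ∉ segRelInt (lo b) (hi b))
    (hnc : ¬ Collinear ℝ (Set.Icc (lo a) (hi a) ∪ Set.Icc (lo b) (hi b))) :
    POK G lo hi a b := by
  refine ⟨?_, relint_disjoint_of_inter_singleton hsing hz, hnc⟩
  rw [hsing]
  simp [hadj]

/-- partial representation on a set of vertices -/
def RepOn (G : SimpleGraph V) (s : Set V) (lo hi : V → Pt) : Prop :=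
  (∀ v ∈ s, ∃ i, lo v i < hi v i ∧ ∀ j, j ≠ i → lo v j = hi v j) ∧
  (∀ a ∈ s, ∀ b ∈ s, a ≠ b → POK G lo hi a b)

lemma repOn_update [DecidableEq V] {G : SimpleGraph V} {s : Finset V} {v : V} (hv : v ∈ s)
    {lo hi : V → Pt} (hrep : RepOn G ↑(s.erase v) lo hi)
    {l h : Pt} {d : Fin 3} (haxv : AxSeg l h d)
    (hadj : ∀ w ∈ s.erase v, (G.Adj v w ↔ (Set.Icc l h ∩ Set.Icc (lo w) (hi w)).Nonempty))
    (hdis : ∀ w ∈ s.erase v, Disjoint (segRelInt l h) (segRelInt (lo w) (hi w)))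
    (hncl : ∀ w ∈ s.erase v, ¬ Collinear ℝ (Set.Icc l h ∪ Set.Icc (lo w) (hi w))) :
    RepOn G ↑s (Function.update lo v l) (Function.update hi v h) := by
  have hmem' : ∀ y, y ∈ s → y ≠ v → y ∈ s.erase v :=
    fun y hy hyv => Finset.mem_erase.mpr ⟨hyv, hy⟩
  constructor
  · intro y hy
    by_cases hyv : y = v
    · subst hyv
      rw [Function.update_self, Function.update_self]
      exact ⟨d, haxv.1, haxv.2⟩
    · rw [Function.update_of_ne hyv, Function.update_of_ne hyv]
      exact hrep.1 y (by
        rw [Finset.coe_erase]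
        exact ⟨by simpa using hy, by simp [hyv]⟩)
  · intro a ha b hb hab
    have ha' : a ∈ s := by simpa using ha
    have hb' : b ∈ s := by simpa using hb
    by_cases hav : a = v
    · subst hav
      have hbv : b ≠ a := fun e => hab e.symm
      have hbe : b ∈ s.erase a := hmem' b hb' hbv
      refine ⟨?_, ?_, ?_⟩ <;>
        simp only [Function.update_self, Function.update_of_ne hbv] <;>
        [exact hadj b hbe; exact hdis b hbe; exact hncl b hbe]
    · by_cases hbv : b = v
      · subst hbv
        have hae : a ∈ s.erase b := hmem' a ha' hav
        have hres : POK G (Function.update lo b l) (Function.update hi b h) b a := by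
          refine ⟨?_, ?_, ?_⟩ <;>
            simp only [Function.update_self, Function.update_of_ne hav] <;>
            [exact hadj a hae; exact hdis a hae; exact hncl a hae]
        exact pok_symm hres
      · have hae : a ∈ s.erase v := hmem' a ha' hav
        have hbe : b ∈ s.erase v := hmem' b hb' hbv
        have := hrep.2 a (Finset.mem_coe.mpr hae) b (Finset.mem_coe.mpr hbe) hab
        refine ⟨?_, ?_, ?_⟩ <;>
          simp only [Function.update_of_ne hav, Function.update_of_ne hbv] <;>
          [exact this.1; exact this.2.1; exact this.2.2]

end SegAux
namespace SegAux

variable {V : Type*}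

set_option maxHeartbeats 2000000 in
lemma exists_repOn [Fintype V] (G : SimpleGraph V) (hdeg : PPathDegenerate 5 G) :
    ∀ s : Finset V, ∃ lo hi : V → Pt, RepOn G ↑s lo hi := by
  classical
  intro s
  induction s using Finset.strongInduction with
  | _ s ih =>
  rcases eq_or_ne s ∅ with rfl | hsne
  · refine ⟨fun _ _ => 0, fun _ _ => 0, ?_, ?_⟩ <;> intro a ha <;> simp at ha
  set H : G.Subgraph := {
    verts := ↑s
    Adj := fun a b => a ∈ s ∧ b ∈ s ∧ G.Adj a b
    adj_sub := fun hh => hh.2.2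
    edge_vert := fun hh => by simpa using hh.1
    symm := ⟨fun a b hh => ⟨hh.2.1, hh.1, hh.2.2.symm⟩⟩ } with hHdef
  have hHnb : ∀ v y, y ∈ H.neighborSet v ↔ (v ∈ s ∧ y ∈ s ∧ G.Adj v y) :=
    fun v y => Iff.rfl
  have hHv : H.verts.Nonempty := by
    have := Finset.nonempty_iff_ne_empty.mpr hsne
    exact Finset.coe_nonempty.mpr this
  rcases hdeg H hHv with ⟨v, hv, hdeg1⟩ | ⟨x, hinj, hmem, hadjP, hdeg2⟩
  · -- a vertex of degree at most one
    have hvs : v ∈ s := by exact hv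
    have hss : s.erase v ⊂ s := Finset.erase_ssubset hvs
    obtain ⟨lo, hi, rep⟩ := ih _ hss
    have hax : ∀ y ∈ s.erase v, ∃ dd, AxSeg (lo y) (hi y) dd := by
      intro y hy
      obtain ⟨i, h1, h2⟩ := rep.1 y (Finset.mem_coe.mpr hy)
      exact ⟨i, h1, h2⟩
    have hnc : ∀ a ∈ s.erase v, ∀ b ∈ s.erase v, a ≠ b →
        ¬ Collinear ℝ (Set.Icc (lo a) (hi a) ∪ Set.Icc (lo b) (hi b)) := by
      intro a ha b hb hab
      exact (rep.2 a (Finset.mem_coe.mpr ha) b (Finset.mem_coe.mpr hb) hab).2.2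
    rcases Nat.le_one_iff_eq_zero_or_eq_one.mp hdeg1 with h0 | h1
    · -- isolated vertex
      have hnb : H.neighborSet v = ∅ := (Set.ncard_eq_zero (Set.toFinite _)).mp h0
      obtain ⟨l, hh, d, hseg, hdisj, hncl⟩ := extend_free (s.erase v) lo hi hax
      refine ⟨Function.update lo v l, Function.update hi v hh,
        repOn_update hvs rep hseg ?_
          (fun y hy => relint_disjoint_of_inter_empty (hdisj y hy)) hncl⟩
      intro y hy
      have hnadj : ¬ G.Adj v y := by
        intro hady
        have : y ∈ H.neighborSet v := (hHnb v y).mpr ⟨hvs, Finset.mem_of_mem_erase hy, hady⟩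
        rw [hnb] at this
        exact this
      rw [hdisj y hy]
      simp [hnadj]
    · -- leaf vertex
      obtain ⟨u, hnb⟩ := Set.ncard_eq_one.mp h1
      have hu_nb : u ∈ H.neighborSet v := by rw [hnb]; exact Set.mem_singleton u
      have hHvu := (hHnb v u).mp hu_nb
      have hGvu : G.Adj v u := hHvu.2.2
      have huv : u ≠ v := Ne.symm hGvu.ne
      have hue : u ∈ s.erase v := Finset.mem_erase.mpr ⟨huv, hHvu.2.1⟩
      obtain ⟨l, hh, d, p, hseg, hsingl, hrelu, hrelv, hdisj, hncl⟩ :=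
        extend_leaf (s.erase v) lo hi hax hnc hue
      refine ⟨Function.update lo v l, Function.update hi v hh,
        repOn_update hvs rep hseg ?_ ?_ hncl⟩
      · intro y hy
        by_cases hyu : y = u
        · subst hyu
          rw [hsingl]
          simp [hGvu]
        · have hnadj : ¬ G.Adj v y := by
            intro hady
            have : y ∈ H.neighborSet v :=
              (hHnb v y).mpr ⟨hvs, Finset.mem_of_mem_erase hy, hady⟩
            rw [hnb] at this
            exact hyu this
          rw [hdisj y hy hyu]
          simp [hnadj]
      · intro y hy
        by_cases hyu : y = u
        · subst hyu
          exact relint_disjoint_of_inter_singleton hsingl (Or.inl hrelv)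
        · exact relint_disjoint_of_inter_empty (hdisj y hy hyu)
  · -- the bare path case
    have hxs : ∀ i, x i ∈ s := fun i => by exact hmem i
    have hne : ∀ i j : Fin 7, i ≠ j → x i ≠ x j := fun i j hij e => hij (hinj e)
    set s' : Finset V :=
      ((((s.erase (x 1)).erase (x 2)).erase (x 3)).erase (x 4)).erase (x 5) with hs'def
    have hmem_s' : ∀ y, y ∈ s' ↔
        y ∈ s ∧ y ≠ x 1 ∧ y ≠ x 2 ∧ y ≠ x 3 ∧ y ≠ x 4 ∧ y ≠ x 5 := by
      intro y
      simp only [hs'def, Finset.mem_erase]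
      tauto
    have hsub : s' ⊆ s := fun y hy => ((hmem_s' y).mp hy).1
    have hss : s' ⊂ s := by
      rw [Finset.ssubset_iff_of_subset hsub]
      exact ⟨x 1, hxs 1, fun hc => ((hmem_s' _).mp hc).2.1 rfl⟩
    obtain ⟨lo, hi, rep⟩ := ih s' hss
    have hax : ∀ y ∈ s', ∃ dd, AxSeg (lo y) (hi y) dd := by
      intro y hy
      obtain ⟨i, h1, h2⟩ := rep.1 y (Finset.mem_coe.mpr hy)
      exact ⟨i, h1, h2⟩
    have hnc : ∀ a ∈ s', ∀ b ∈ s', a ≠ b →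
        ¬ Collinear ℝ (Set.Icc (lo a) (hi a) ∪ Set.Icc (lo b) (hi b)) := by
      intro a ha b hb hab
      exact (rep.2 a (Finset.mem_coe.mpr ha) b (Finset.mem_coe.mpr hb) hab).2.2
    have hx0s' : x 0 ∈ s' := (hmem_s' _).mpr
      ⟨hxs 0, hne 0 1 (by decide), hne 0 2 (by decide), hne 0 3 (by decide),
        hne 0 4 (by decide), hne 0 5 (by decide)⟩
    have hx6s' : x 6 ∈ s' := (hmem_s' _).mpr
      ⟨hxs 6, hne 6 1 (by decide), hne 6 2 (by decide), hne 6 3 (by decide),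
        hne 6 4 (by decide), hne 6 5 (by decide)⟩
    have hedge : ∀ (i : Fin 6) (a b : Fin 7), i.castSucc = a → i.succ = b →
        H.Adj (x a) (x b) := by
      intro i a b h1 h2
      have := hadjP i
      rw [h1, h2] at this
      exact this
    have e01 : H.Adj (x 0) (x 1) := hedge 0 0 1 (by decide) (by decide)
    have e12 : H.Adj (x 1) (x 2) := hedge 1 1 2 (by decide) (by decide)
    have e23 : H.Adj (x 2) (x 3) := hedge 2 2 3 (by decide) (by decide)
    have e34 : H.Adj (x 3) (x 4) := hedge 3 3 4 (by decide) (by decide)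
    have e45 : H.Adj (x 4) (x 5) := hedge 4 4 5 (by decide) (by decide)
    have e56 : H.Adj (x 5) (x 6) := hedge 5 5 6 (by decide) (by decide)
    have hNgen : ∀ a b c : Fin 7, H.Adj (x b) (x a) → H.Adj (x b) (x c) → a ≠ c →
        0 < (b : ℕ) → (b : ℕ) < 6 → H.neighborSet (x b) = {x a, x c} := by
      intro a b c hba hbc hac hb1 hb2
      have hsub2 : ({x a, x c} : Set V) ⊆ H.neighborSet (x b) := by
        intro y hy
        rcases Set.mem_insert_iff.mp hy with rfl | hy'
        · exact hba
        · rw [Set.mem_singleton_iff.mp hy']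
          exact hbc
      have hcard := hdeg2 b hb1 hb2
      have hpair : ({x a, x c} : Set V).ncard = 2 := Set.ncard_pair (hne a c hac)
      exact (Set.eq_of_subset_of_ncard_le hsub2
        (le_of_eq (hcard.trans hpair.symm)) (Set.toFinite _)).symm
    have N1 : H.neighborSet (x 1) = {x 0, x 2} :=
      hNgen 0 1 2 e01.symm e12 (by decide) (by decide) (by decide)
    have N2 : H.neighborSet (x 2) = {x 1, x 3} :=
      hNgen 1 2 3 e12.symm e23 (by decide) (by decide) (by decide)
    have N3 : H.neighborSet (x 3) = {x 2, x 4} :=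
      hNgen 2 3 4 e23.symm e34 (by decide) (by decide) (by decide)
    have N4 : H.neighborSet (x 4) = {x 3, x 5} :=
      hNgen 3 4 5 e34.symm e45 (by decide) (by decide) (by decide)
    have N5 : H.neighborSet (x 5) = {x 4, x 6} :=
      hNgen 4 5 6 e45.symm e56 (by decide) (by decide) (by decide)
    have hAdjInt : ∀ (k a c : Fin 7), H.neighborSet (x k) = {x a, x c} →
        ∀ y, y ∈ s → (G.Adj (x k) y ↔ (y = x a ∨ y = x c)) := by
      intro k a c hnbk y hys
      constructor
      · intro hady
        have : y ∈ H.neighborSet (x k) := (hHnb _ _).mpr ⟨hxs k, hys, hady⟩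
        rw [hnbk] at this
        simpa using this
      · rintro (rfl | rfl)
        · have : x a ∈ H.neighborSet (x k) := by rw [hnbk]; exact Set.mem_insert _ _
          exact ((hHnb _ _).mp this).2.2
        · have : x c ∈ H.neighborSet (x k) := by
            rw [hnbk]; exact Set.mem_insert_iff.mpr (Or.inr rfl)
          exact ((hHnb _ _).mp this).2.2
    have g01 : G.Adj (x 0) (x 1) := e01.2.2
    have g12 : G.Adj (x 1) (x 2) := e12.2.2
    have g23 : G.Adj (x 2) (x 3) := e23.2.2
    have g34 : G.Adj (x 3) (x 4) := e34.2.2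
    have g45 : G.Adj (x 4) (x 5) := e45.2.2
    have g56 : G.Adj (x 5) (x 6) := e56.2.2
    have gn : ∀ (k a c j : Fin 7), H.neighborSet (x k) = {x a, x c} → j ≠ a → j ≠ c →
        ¬ G.Adj (x k) (x j) := by
      intro k a c j hnbk hja hjc hady
      rcases (hAdjInt k a c hnbk (x j) (hxs j)).mp hady with e | e
      · exact hne j a hja e
      · exact hne j c hjc e
    obtain ⟨L₁, K₁, L₂, K₂, L₃, K₃, L₄, K₄, L₅, K₅, P₀, P₁, P₂, P₃, P₄, P₅,
      d₁, d₂, d₃, d₄, d₅,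
      hax1, hax2, hax3, hax4, hax5, hs0, hs1, hs2, hs3, hs4, hs5,
      hr0, hr1, hr2, hr3, hr4, hr5,
      hE2u, hE3u, hE4u, hE5u, hE1w, hE2w, hE3w, hE4w,
      hE13, hE14, hE15, hE24, hE25, hE35, hEQ, hNCQ,
      hNC12, hNC13, hNC14, hNC15, hNC23, hNC24, hNC25, hNC34, hNC35, hNC45⟩ :=
      extend_path s' lo hi hax hnc hx0s' hx6s' (hne 0 6 (by decide))
    set lo' : V → Pt := fun y =>
      if y = x 1 then L₁ else if y = x 2 then L₂ else if y = x 3 then L₃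
      else if y = x 4 then L₄ else if y = x 5 then L₅ else lo y with hlo'def
    set hi' : V → Pt := fun y =>
      if y = x 1 then K₁ else if y = x 2 then K₂ else if y = x 3 then K₃
      else if y = x 4 then K₄ else if y = x 5 then K₅ else hi y with hhi'def
    have hv1 : lo' (x 1) = L₁ := by simp [hlo'def]
    have hw1 : hi' (x 1) = K₁ := by simp [hhi'def]
    have hv2 : lo' (x 2) = L₂ := by simp [hlo'def, hne 2 1 (by decide)]
    have hw2 : hi' (x 2) = K₂ := by simp [hhi'def, hne 2 1 (by decide)]
    have hv3 : lo' (x 3) = L₃ := by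
      simp [hlo'def, hne 3 1 (by decide), hne 3 2 (by decide)]
    have hw3 : hi' (x 3) = K₃ := by
      simp [hhi'def, hne 3 1 (by decide), hne 3 2 (by decide)]
    have hv4 : lo' (x 4) = L₄ := by
      simp [hlo'def, hne 4 1 (by decide), hne 4 2 (by decide), hne 4 3 (by decide)]
    have hw4 : hi' (x 4) = K₄ := by
      simp [hhi'def, hne 4 1 (by decide), hne 4 2 (by decide), hne 4 3 (by decide)]
    have hv5 : lo' (x 5) = L₅ := by
      simp [hlo'def, hne 5 1 (by decide), hne 5 2 (by decide), hne 5 3 (by decide),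
        hne 5 4 (by decide)]
    have hw5 : hi' (x 5) = K₅ := by
      simp [hhi'def, hne 5 1 (by decide), hne 5 2 (by decide), hne 5 3 (by decide),
        hne 5 4 (by decide)]
    have hOld : ∀ y ∈ s', lo' y = lo y ∧ hi' y = hi y := by
      intro y hy
      obtain ⟨-, h1, h2, h3, h4, h5⟩ := (hmem_s' y).mp hy
      constructor <;> simp [hlo'def, hhi'def, h1, h2, h3, h4, h5]
    have hclass : ∀ y ∈ s, y ∈ s' ∨ y = x 1 ∨ y = x 2 ∨ y = x 3 ∨ y = x 4 ∨ y = x 5 := by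
      intro y hys
      by_cases h1 : y = x 1
      · exact Or.inr (Or.inl h1)
      by_cases h2 : y = x 2
      · exact Or.inr (Or.inr (Or.inl h2))
      by_cases h3 : y = x 3
      · exact Or.inr (Or.inr (Or.inr (Or.inl h3)))
      by_cases h4 : y = x 4
      · exact Or.inr (Or.inr (Or.inr (Or.inr (Or.inl h4))))
      by_cases h5 : y = x 5
      · exact Or.inr (Or.inr (Or.inr (Or.inr (Or.inr h5))))
      exact Or.inl ((hmem_s' y).mpr ⟨hys, h1, h2, h3, h4, h5⟩)
    -- the pair conditions: new segments versus old vertices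
    have hP1 : ∀ b ∈ s', POK G lo' hi' (x 1) b := by
      intro b hb
      have hbs : b ∈ s := hsub hb
      obtain ⟨-, hb1, hb2, hb3, hb4, hb5⟩ := (hmem_s' b).mp hb
      have hOb := hOld b hb
      by_cases hb0 : b = x 0
      · subst hb0
        refine ⟨?_, ?_, ?_⟩
        · rw [hv1, hw1, hOb.1, hOb.2, hs0]
          simp [g01.symm]
        · rw [hv1, hw1, hOb.1, hOb.2]
          exact hr0
        · rw [hv1, hw1, hOb.1, hOb.2]
          exact (hNCQ _ hx0s').1
      · have hnadj : ¬ G.Adj (x 1) b := by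
          intro hady
          rcases (hAdjInt 1 0 2 N1 b hbs).mp hady with e | e
          · exact hb0 e
          · exact hb2 e
        by_cases hb6 : b = x 6
        · subst hb6
          refine pok_of_empty hnadj ?_ ?_
          · rw [hv1, hw1, hOb.1, hOb.2]; exact hE1w
          · rw [hv1, hw1, hOb.1, hOb.2]; exact (hNCQ _ hx6s').1
        · refine pok_of_empty hnadj ?_ ?_
          · rw [hv1, hw1, hOb.1, hOb.2]; exact (hEQ b hb hb0 hb6).1
          · rw [hv1, hw1, hOb.1, hOb.2]; exact (hNCQ _ hb).1
    have hP2 : ∀ b ∈ s', POK G lo' hi' (x 2) b := by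
      intro b hb
      have hbs : b ∈ s := hsub hb
      obtain ⟨-, hb1, hb2, hb3, hb4, hb5⟩ := (hmem_s' b).mp hb
      have hOb := hOld b hb
      have hnadj : ¬ G.Adj (x 2) b := by
        intro hady
        rcases (hAdjInt 2 1 3 N2 b hbs).mp hady with e | e
        · exact hb1 e
        · exact hb3 e
      by_cases hb0 : b = x 0
      · subst hb0
        refine pok_of_empty hnadj ?_ ?_
        · rw [hv2, hw2, hOb.1, hOb.2]; exact hE2u
        · rw [hv2, hw2, hOb.1, hOb.2]; exact (hNCQ _ hx0s').2.1
      by_cases hb6 : b = x 6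
      · subst hb6
        refine pok_of_empty hnadj ?_ ?_
        · rw [hv2, hw2, hOb.1, hOb.2]; exact hE2w
        · rw [hv2, hw2, hOb.1, hOb.2]; exact (hNCQ _ hx6s').2.1
      refine pok_of_empty hnadj ?_ ?_
      · rw [hv2, hw2, hOb.1, hOb.2]; exact (hEQ b hb hb0 hb6).2.1
      · rw [hv2, hw2, hOb.1, hOb.2]; exact (hNCQ _ hb).2.1
    have hP3 : ∀ b ∈ s', POK G lo' hi' (x 3) b := by
      intro b hb
      have hbs : b ∈ s := hsub hb
      obtain ⟨-, hb1, hb2, hb3, hb4, hb5⟩ := (hmem_s' b).mp hb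
      have hOb := hOld b hb
      have hnadj : ¬ G.Adj (x 3) b := by
        intro hady
        rcases (hAdjInt 3 2 4 N3 b hbs).mp hady with e | e
        · exact hb2 e
        · exact hb4 e
      by_cases hb0 : b = x 0
      · subst hb0
        refine pok_of_empty hnadj ?_ ?_
        · rw [hv3, hw3, hOb.1, hOb.2]; exact hE3u
        · rw [hv3, hw3, hOb.1, hOb.2]; exact (hNCQ _ hx0s').2.2.1
      by_cases hb6 : b = x 6
      · subst hb6
        refine pok_of_empty hnadj ?_ ?_
        · rw [hv3, hw3, hOb.1, hOb.2]; exact hE3w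
        · rw [hv3, hw3, hOb.1, hOb.2]; exact (hNCQ _ hx6s').2.2.1
      refine pok_of_empty hnadj ?_ ?_
      · rw [hv3, hw3, hOb.1, hOb.2]; exact (hEQ b hb hb0 hb6).2.2.1
      · rw [hv3, hw3, hOb.1, hOb.2]; exact (hNCQ _ hb).2.2.1
    have hP4 : ∀ b ∈ s', POK G lo' hi' (x 4) b := by
      intro b hb
      have hbs : b ∈ s := hsub hb
      obtain ⟨-, hb1, hb2, hb3, hb4, hb5⟩ := (hmem_s' b).mp hb
      have hOb := hOld b hb
      have hnadj : ¬ G.Adj (x 4) b := by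
        intro hady
        rcases (hAdjInt 4 3 5 N4 b hbs).mp hady with e | e
        · exact hb3 e
        · exact hb5 e
      by_cases hb0 : b = x 0
      · subst hb0
        refine pok_of_empty hnadj ?_ ?_
        · rw [hv4, hw4, hOb.1, hOb.2]; exact hE4u
        · rw [hv4, hw4, hOb.1, hOb.2]; exact (hNCQ _ hx0s').2.2.2.1
      by_cases hb6 : b = x 6
      · subst hb6
        refine pok_of_empty hnadj ?_ ?_
        · rw [hv4, hw4, hOb.1, hOb.2]; exact hE4w
        · rw [hv4, hw4, hOb.1, hOb.2]; exact (hNCQ _ hx6s').2.2.2.1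
      refine pok_of_empty hnadj ?_ ?_
      · rw [hv4, hw4, hOb.1, hOb.2]; exact (hEQ b hb hb0 hb6).2.2.2.1
      · rw [hv4, hw4, hOb.1, hOb.2]; exact (hNCQ _ hb).2.2.2.1
    have hP5 : ∀ b ∈ s', POK G lo' hi' (x 5) b := by
      intro b hb
      have hbs : b ∈ s := hsub hb
      obtain ⟨-, hb1, hb2, hb3, hb4, hb5⟩ := (hmem_s' b).mp hb
      have hOb := hOld b hb
      by_cases hb6 : b = x 6
      · subst hb6
        refine ⟨?_, ?_, ?_⟩
        · rw [hv5, hw5, hOb.1, hOb.2, hs5]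
          simp [g56]
        · rw [hv5, hw5, hOb.1, hOb.2]
          exact hr5
        · rw [hv5, hw5, hOb.1, hOb.2]
          exact (hNCQ _ hx6s').2.2.2.2
      · have hnadj : ¬ G.Adj (x 5) b := by
          intro hady
          rcases (hAdjInt 5 4 6 N5 b hbs).mp hady with e | e
          · exact hb4 e
          · exact hb6 e
        by_cases hb0 : b = x 0
        · subst hb0
          refine pok_of_empty hnadj ?_ ?_
          · rw [hv5, hw5, hOb.1, hOb.2]; exact hE5u
          · rw [hv5, hw5, hOb.1, hOb.2]; exact (hNCQ _ hx0s').2.2.2.2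
        · refine pok_of_empty hnadj ?_ ?_
          · rw [hv5, hw5, hOb.1, hOb.2]; exact (hEQ b hb hb0 hb6).2.2.2.2
          · rw [hv5, hw5, hOb.1, hOb.2]; exact (hNCQ _ hb).2.2.2.2
    -- pair conditions among the new segments
    have hP12 : POK G lo' hi' (x 1) (x 2) := by
      refine ⟨?_, ?_, ?_⟩
      · rw [hv1, hw1, hv2, hw2, hs1]; simp [g12]
      · rw [hv1, hw1, hv2, hw2]; exact hr1
      · rw [hv1, hw1, hv2, hw2]; exact hNC12
    have hP23 : POK G lo' hi' (x 2) (x 3) := by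
      refine ⟨?_, ?_, ?_⟩
      · rw [hv2, hw2, hv3, hw3, hs2]; simp [g23]
      · rw [hv2, hw2, hv3, hw3]; exact hr2
      · rw [hv2, hw2, hv3, hw3]; exact hNC23
    have hP34 : POK G lo' hi' (x 3) (x 4) := by
      refine ⟨?_, ?_, ?_⟩
      · rw [hv3, hw3, hv4, hw4, hs3]; simp [g34]
      · rw [hv3, hw3, hv4, hw4]; exact hr3
      · rw [hv3, hw3, hv4, hw4]; exact hNC34
    have hP45 : POK G lo' hi' (x 4) (x 5) := by
      refine ⟨?_, ?_, ?_⟩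
      · rw [hv4, hw4, hv5, hw5, hs4]; simp [g45]
      · rw [hv4, hw4, hv5, hw5]; exact hr4
      · rw [hv4, hw4, hv5, hw5]; exact hNC45
    have hP13 : POK G lo' hi' (x 1) (x 3) := by
      refine pok_of_empty (gn 1 0 2 3 N1 (by decide) (by decide)) ?_ ?_
      · rw [hv1, hw1, hv3, hw3]; exact hE13
      · rw [hv1, hw1, hv3, hw3]; exact hNC13
    have hP14 : POK G lo' hi' (x 1) (x 4) := by
      refine pok_of_empty (gn 1 0 2 4 N1 (by decide) (by decide)) ?_ ?_
      · rw [hv1, hw1, hv4, hw4]; exact hE14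
      · rw [hv1, hw1, hv4, hw4]; exact hNC14
    have hP15 : POK G lo' hi' (x 1) (x 5) := by
      refine pok_of_empty (gn 1 0 2 5 N1 (by decide) (by decide)) ?_ ?_
      · rw [hv1, hw1, hv5, hw5]; exact hE15
      · rw [hv1, hw1, hv5, hw5]; exact hNC15
    have hP24 : POK G lo' hi' (x 2) (x 4) := by
      refine pok_of_empty (gn 2 1 3 4 N2 (by decide) (by decide)) ?_ ?_
      · rw [hv2, hw2, hv4, hw4]; exact hE24
      · rw [hv2, hw2, hv4, hw4]; exact hNC24
    have hP25 : POK G lo' hi' (x 2) (x 5) := by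
      refine pok_of_empty (gn 2 1 3 5 N2 (by decide) (by decide)) ?_ ?_
      · rw [hv2, hw2, hv5, hw5]; exact hE25
      · rw [hv2, hw2, hv5, hw5]; exact hNC25
    have hP35 : POK G lo' hi' (x 3) (x 5) := by
      refine pok_of_empty (gn 3 2 4 5 N3 (by decide) (by decide)) ?_ ?_
      · rw [hv3, hw3, hv5, hw5]; exact hE35
      · rw [hv3, hw3, hv5, hw5]; exact hNC35
    have hPOO : ∀ a ∈ s', ∀ b ∈ s', a ≠ b → POK G lo' hi' a b := by
      intro a ha b hb hab
      have hOa := hOld a ha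
      have hOb := hOld b hb
      have hold := rep.2 a (Finset.mem_coe.mpr ha) b (Finset.mem_coe.mpr hb) hab
      refine ⟨?_, ?_, ?_⟩ <;> rw [hOa.1, hOa.2, hOb.1, hOb.2] <;>
        [exact hold.1; exact hold.2.1; exact hold.2.2]
    refine ⟨lo', hi', ?_, ?_⟩
    · intro y hy
      have hys : y ∈ s := by simpa using hy
      rcases hclass y hys with h | h | h | h | h | h
      · obtain ⟨i, h1, h2⟩ := rep.1 y (Finset.mem_coe.mpr h)
        rw [(hOld y h).1, (hOld y h).2]
        exact ⟨i, h1, h2⟩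
      · subst h; rw [hv1, hw1]; exact ⟨d₁, hax1.1, hax1.2⟩
      · subst h; rw [hv2, hw2]; exact ⟨d₂, hax2.1, hax2.2⟩
      · subst h; rw [hv3, hw3]; exact ⟨d₃, hax3.1, hax3.2⟩
      · subst h; rw [hv4, hw4]; exact ⟨d₄, hax4.1, hax4.2⟩
      · subst h; rw [hv5, hw5]; exact ⟨d₅, hax5.1, hax5.2⟩
    · intro a ha b hb hab
      have has : a ∈ s := by simpa using ha
      have hbs : b ∈ s := by simpa using hb
      rcases hclass a has with ha' | ha' | ha' | ha' | ha' | ha'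
      · rcases hclass b hbs with hb' | hb' | hb' | hb' | hb' | hb'
        · exact hPOO a ha' b hb' hab
        · subst hb'; exact pok_symm (hP1 a ha')
        · subst hb'; exact pok_symm (hP2 a ha')
        · subst hb'; exact pok_symm (hP3 a ha')
        · subst hb'; exact pok_symm (hP4 a ha')
        · subst hb'; exact pok_symm (hP5 a ha')
      · subst ha'
        rcases hclass b hbs with hb' | hb' | hb' | hb' | hb' | hb'
        · exact hP1 b hb'
        · exact absurd hb' (by rw [← hb'] at hab ⊢; exact fun e => hab rfl)
        · subst hb'; exact hP12
        · subst hb'; exact hP13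
        · subst hb'; exact hP14
        · subst hb'; exact hP15
      · subst ha'
        rcases hclass b hbs with hb' | hb' | hb' | hb' | hb' | hb'
        · exact hP2 b hb'
        · subst hb'; exact pok_symm hP12
        · exact absurd rfl (hb' ▸ hab)
        · subst hb'; exact hP23
        · subst hb'; exact hP24
        · subst hb'; exact hP25
      · subst ha'
        rcases hclass b hbs with hb' | hb' | hb' | hb' | hb' | hb'
        · exact hP3 b hb'
        · subst hb'; exact pok_symm hP13
        · subst hb'; exact pok_symm hP23
        · exact absurd rfl (hb' ▸ hab)
        · subst hb'; exact hP34
        · subst hb'; exact hP35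
      · subst ha'
        rcases hclass b hbs with hb' | hb' | hb' | hb' | hb' | hb'
        · exact hP4 b hb'
        · subst hb'; exact pok_symm hP14
        · subst hb'; exact pok_symm hP24
        · subst hb'; exact pok_symm hP34
        · exact absurd rfl (hb' ▸ hab)
        · subst hb'; exact hP45
      · subst ha'
        rcases hclass b hbs with hb' | hb' | hb' | hb' | hb' | hb'
        · exact hP5 b hb'
        · subst hb'; exact pok_symm hP15
        · subst hb'; exact pok_symm hP25
        · subst hb'; exact pok_symm hP35
        · subst hb'; exact pok_symm hP45
        · exact absurd rfl (hb' ▸ hab)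

end SegAux

/-- Every finite `5`-path-degenerate graph has a `3`-segment representation. -/
theorem segRep_of_fivePathDegenerate {V : Type*} [Fintype V] (G : SimpleGraph V)
    (h : PPathDegenerate 5 G) :
    ∃ lo hi : V → Fin 3 → ℝ, IsSegRep G lo hi := by
  obtain ⟨lo, hi, rep⟩ := SegAux.exists_repOn G h Finset.univ
  refine ⟨lo, hi, ?_, ?_, ?_, ?_⟩
  · intro v; exact rep.1 v (by simp)
  · intro a b hab; exact (rep.2 a (by simp) b (by simp) hab).1
  · intro a b hab; exact (rep.2 a (by simp) b (by simp) hab).2.1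
  · intro a b hab; exact (rep.2 a (by simp) b (by simp) hab).2.2
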